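/- If φ = φ̄₋ + φ₊ ∈ L^∞ is a rational function and the Toeplitz operator T_φ on H² is hyponormal, then deg(φ₋) ≤ deg(φ₊); in particular, if φ = Σ_{n=−m}^{N} a_n zⁿ is a trigonometric polynomial with T_φ hyponormal, then m ≤ N. -/

import Mathlib

open MeasureTheory Complex Real InnerProductSpace Submodule

set_option maxHeartbeats 1000000
set_option synthInstance.maxHeartbeats 200000

noncomputable section

namespace BlockToeplitz

instance fact2pi : Fact (0 < 2 * π) := ⟨by positivity⟩

/-- The unit circle, as the additive circle `ℝ / 2πℤ`. -/
abbrev 𝕋 : Type := AddCircle (2 * π)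

/-- Normalized Haar (Lebesgue) measure on the circle. -/
abbrev μ𝕋 : Measure 𝕋 := AddCircle.haarAddCircle

section Pointwise

variable {E F : Type*} [NormedAddCommGroup E] [NormedSpace ℂ E]
  [NormedAddCommGroup F] [NormedSpace ℂ F]

theorem memLp_pointwise {Φ : 𝕋 → (E →L[ℂ] F)} (hm : AEStronglyMeasurable Φ μ𝕋)
    {C : ℝ} (hC : ∀ x, ‖Φ x‖ ≤ C) (f : Lp E 2 μ𝕋) :
    MemLp (fun x => Φ x (f x)) 2 μ𝕋 := by
  refine MemLp.of_le_mul (c := C) (Lp.memLp f) ?_ ?_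
  · exact isBoundedBilinearMap_apply.continuous.comp_aestronglyMeasurable
      (hm.prodMk (Lp.aestronglyMeasurable f))
  · refine Filter.Eventually.of_forall fun x => ?_
    exact (ContinuousLinearMap.le_opNorm _ _).trans
      (mul_le_mul_of_nonneg_right (hC x) (norm_nonneg _))

/-- The operator on `L²` of pointwise application of a uniformly bounded family of
operators (e.g. multiplication by an `L^∞` matrix function). -/
def pointwiseCLM (Φ : 𝕋 → (E →L[ℂ] F)) (hm : AEStronglyMeasurable Φ μ𝕋)
    {C : ℝ} (hC : ∀ x, ‖Φ x‖ ≤ C) : Lp E 2 μ𝕋 →L[ℂ] Lp F 2 μ𝕋 :=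
  LinearMap.mkContinuous
    { toFun := fun f => (memLp_pointwise hm hC f).toLp _
      map_add' := fun f g => by
        rw [← MemLp.toLp_add (memLp_pointwise hm hC f) (memLp_pointwise hm hC g)]
        refine MemLp.toLp_congr _ _ ?_
        filter_upwards [Lp.coeFn_add f g] with x hx
        simp only [hx, Pi.add_apply, map_add]
      map_smul' := fun c f => by
        rw [RingHom.id_apply, ← MemLp.toLp_const_smul c (memLp_pointwise hm hC f)]
        refine MemLp.toLp_congr _ _ ?_
        filter_upwards [Lp.coeFn_smul c f] with x hx
        simp only [hx, Pi.smul_apply, ContinuousLinearMap.map_smul] }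
    (max C 0)
    (by
      intro f
      simp only [LinearMap.coe_mk, AddHom.coe_mk]
      rw [Lp.norm_toLp]
      have hb : eLpNorm (fun x => Φ x (f x)) 2 μ𝕋
          ≤ ENNReal.ofReal (max C 0) * eLpNorm (f : 𝕋 → E) 2 μ𝕋 := by
        refine eLpNorm_le_mul_eLpNorm_of_ae_le_mul ?_ 2
        refine Filter.Eventually.of_forall fun x => ?_
        exact (ContinuousLinearMap.le_opNorm _ _).trans
          (mul_le_mul_of_nonneg_right ((hC x).trans (le_max_left _ _)) (norm_nonneg _))
      calc (eLpNorm (fun x => Φ x (f x)) 2 μ𝕋).toReal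
          ≤ (ENNReal.ofReal (max C 0) * eLpNorm (f : 𝕋 → E) 2 μ𝕋).toReal := by
            refine ENNReal.toReal_mono ?_ hb
            exact ENNReal.mul_ne_top ENNReal.ofReal_ne_top (Lp.eLpNorm_ne_top f)
        _ = max C 0 * ‖f‖ := by
            rw [ENNReal.toReal_mul, ENNReal.toReal_ofReal (le_max_right C 0), Lp.norm_def])

@[simp] theorem pointwiseCLM_apply (Φ : 𝕋 → (E →L[ℂ] F)) (hm : AEStronglyMeasurable Φ μ𝕋)
    {C : ℝ} (hC : ∀ x, ‖Φ x‖ ≤ C) (f : Lp E 2 μ𝕋) :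
    pointwiseCLM Φ hm hC f = (memLp_pointwise hm hC f).toLp _ := rfl

end Pointwise

end BlockToeplitz

namespace BlockToeplitz
open scoped ComplexConjugate

variable {ι : Type} [Fintype ι]

/-- `ℂ^ι`. -/
abbrev V (ι : Type) [Fintype ι] : Type := EuclideanSpace ℂ ι

/-- The space `L²(𝕋, ℂ^ι)`. -/
abbrev L2 (ι : Type) [Fintype ι] : Type := Lp (V ι) 2 μ𝕋

/-- The vector-valued trigonometric monomial `z^k ⊗ e_i` as an element of `L²`. -/
def fourierV (ι : Type) [Fintype ι] [DecidableEq ι] (k : ℤ) (i : ι) : L2 ι :=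
  (ContinuousMap.toLp (E := V ι) 2 μ𝕋 ℂ)
    ⟨fun x => fourier k x • EuclideanSpace.single i 1,
      (map_continuous (fourier k)).smul continuous_const⟩

/-- The span of the analytic-negative monomials. -/
def negSpan (ι : Type) [Fintype ι] : Submodule ℂ (L2 ι) :=
  Submodule.span ℂ
    {f | ∃ k : ℤ, k < 0 ∧ ∃ i : ι, f = @fourierV ι _ (Classical.decEq ι) k i}

/-- The vector-valued Hardy space `H²(𝕋, ℂ^ι)`, i.e. the orthogonal complement in
`L²` of the span of the monomials `z^k ⊗ e_i`, `k < 0`. -/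
def hardy (ι : Type) [Fintype ι] : Submodule ℂ (L2 ι) := (negSpan ι)ᗮ

/-- The Hardy space as a Hilbert space. -/
abbrev H2 (ι : Type) [Fintype ι] : Type := ↥(hardy ι)

instance : CompleteSpace (H2 ι) := by
  unfold H2 hardy; infer_instance

instance : HasOrthogonalProjection (hardy ι) := by
  unfold hardy; infer_instance

/-- The orthogonal projection `P` of `L²` onto `H²`. -/
def hardyProj (ι : Type) [Fintype ι] : L2 ι →L[ℂ] H2 ι :=
  orthogonalProjection (hardy ι)

/-- A matrix-valued `L^∞` function on the circle (the matrices being identified with the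
operators on `ℂ^ι` that they induce): a bounded measurable family of operators. -/
structure Symbol (ι : Type) [Fintype ι] : Type where
  toFun : 𝕋 → (V ι →L[ℂ] V ι)
  meas : AEStronglyMeasurable toFun μ𝕋
  bound : ℝ
  le_bound : ∀ x, ‖toFun x‖ ≤ bound

instance : CoeFun (Symbol ι) (fun _ => 𝕋 → (V ι →L[ℂ] V ι)) := ⟨Symbol.toFun⟩

/-- The multiplication operator `f ↦ Φ f` on `L²(𝕋, ℂ^ι)`. -/
def Symbol.mulLp (Φ : Symbol ι) : L2 ι →L[ℂ] L2 ι :=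
  pointwiseCLM Φ.toFun Φ.meas Φ.le_bound

/-- Pointwise product (composition) of two matrix symbols. -/
def Symbol.mul (Φ Ψ : Symbol ι) : Symbol ι where
  toFun := fun x => (Φ x).comp (Ψ x)
  meas := isBoundedBilinearMap_comp.continuous.comp_aestronglyMeasurable
    (Φ.meas.prodMk Ψ.meas)
  bound := max Φ.bound 0 * max Ψ.bound 0
  le_bound := fun x => (ContinuousLinearMap.opNorm_comp_le _ _).trans <|
    mul_le_mul ((Φ.le_bound x).trans (le_max_left _ _))
      ((Ψ.le_bound x).trans (le_max_left _ _)) (norm_nonneg _) (le_max_right _ _)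

/-- The pointwise adjoint symbol `Φ*` (conjugate transpose). -/
def Symbol.star (Φ : Symbol ι) : Symbol ι where
  toFun := fun x => ContinuousLinearMap.adjoint (Φ x)
  meas := (ContinuousLinearMap.adjoint (𝕜 := ℂ) (E := V ι)
      (F := V ι)).continuous.comp_aestronglyMeasurable Φ.meas
  bound := Φ.bound
  le_bound := fun x =>
    le_trans
      (le_of_eq ((ContinuousLinearMap.adjoint (𝕜 := ℂ) (E := V ι) (F := V ι)).norm_map (Φ.toFun x)))
      (Φ.le_bound x)

end BlockToeplitz

namespace BlockToeplitz
open scoped ComplexConjugate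

theorem norm_fourier_apply (k : ℤ) (x : 𝕋) : ‖fourier k x‖ = 1 := by
  rw [fourier_apply]; exact Circle.norm_coe _

section CompNeg

variable {E : Type*} [NormedAddCommGroup E] [NormedSpace ℂ E]

/-- The composition operator `f(z) ↦ f(z̄)` (i.e. `x ↦ -x` on the additive circle)
on `L²`. -/
def compNeg (E : Type*) [NormedAddCommGroup E] [NormedSpace ℂ E] :
    Lp E 2 μ𝕋 →L[ℂ] Lp E 2 μ𝕋 :=
  LinearMap.mkContinuous
    { toFun := fun f =>
        Lp.compMeasurePreserving (E := E) (p := 2) Neg.neg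
          (Measure.measurePreserving_neg μ𝕋) f
      map_add' := fun f g => by
        exact map_add (Lp.compMeasurePreserving Neg.neg (Measure.measurePreserving_neg μ𝕋)) f g
      map_smul' := fun c f => by
        apply Lp.ext
        have h1 := Lp.coeFn_compMeasurePreserving (μ := μ𝕋) (c • f)
          (Measure.measurePreserving_neg μ𝕋)
        have h2 := Lp.coeFn_compMeasurePreserving (μ := μ𝕋) f
          (Measure.measurePreserving_neg μ𝕋)
        have h3 : ((c • f : Lp E 2 μ𝕋) : 𝕋 → E) ∘ Neg.neg
            =ᵐ[μ𝕋] ((c • (f : 𝕋 → E)) ∘ Neg.neg) :=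
          (Measure.measurePreserving_neg μ𝕋).quasiMeasurePreserving.ae_eq_comp
            (Lp.coeFn_smul c f)
        filter_upwards [h1, h3,
          Lp.coeFn_smul c (Lp.compMeasurePreserving (E := E) (p := 2) Neg.neg
            (Measure.measurePreserving_neg μ𝕋) f), h2]
          with x hx1 hx3 hx4 hx2
        rw [RingHom.id_apply, hx1, hx3, hx4]
        show c • (f : 𝕋 → E) (-x)
            = c • (Lp.compMeasurePreserving (E := E) (p := 2) Neg.neg
                (Measure.measurePreserving_neg μ𝕋) f : 𝕋 → E) x
        rw [hx2]
        rfl }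
    1
    (fun f => by
      simpa using (Lp.norm_compMeasurePreserving (E := E) (p := 2) f
        (Measure.measurePreserving_neg μ𝕋)).le)

/-- The unitary operator `J f (z) = z̄ f(z̄)` on `L²`. -/
def Jop (E : Type*) [NormedAddCommGroup E] [NormedSpace ℂ E] :
    Lp E 2 μ𝕋 →L[ℂ] Lp E 2 μ𝕋 :=
  (pointwiseCLM (fun x => (fourier (-1) x : ℂ) • (1 : E →L[ℂ] E))
      (((map_continuous (fourier (-1))).smul continuous_const).aestronglyMeasurable)
      (C := 1)
      (fun x => by
        show ‖(fourier (-1)) x • (1 : E →L[ℂ] E)‖ ≤ 1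
        rw [norm_smul ((fourier (-1)) x) (1 : E →L[ℂ] E), norm_fourier_apply, one_mul,
          ContinuousLinearMap.one_def]
        exact ContinuousLinearMap.norm_id_le)).comp (compNeg E)

end CompNeg

end BlockToeplitz

namespace BlockToeplitz
open scoped ComplexConjugate

variable {ι : Type} [Fintype ι]

/-- The pointwise transposed-conjugated-reflected symbol `Φ̃(z) := Φ(z̄)*`. -/
def Symbol.tilde (Φ : Symbol ι) : Symbol ι where
  toFun := fun x => ContinuousLinearMap.adjoint (Φ.toFun (-x))
  meas := (ContinuousLinearMap.adjoint (𝕜 := ℂ) (E := V ι)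
      (F := V ι)).continuous.comp_aestronglyMeasurable
    (Φ.meas.comp_quasiMeasurePreserving
      (Measure.measurePreserving_neg μ𝕋).quasiMeasurePreserving)
  bound := Φ.bound
  le_bound := fun x =>
    le_trans
      (le_of_eq
        ((ContinuousLinearMap.adjoint (𝕜 := ℂ) (E := V ι) (F := V ι)).norm_map (Φ.toFun (-x))))
      (Φ.le_bound (-x))

/-- A matrix symbol belongs to `H^∞` iff multiplication by it leaves the Hardy space
invariant. -/
def Symbol.MemHinf (Φ : Symbol ι) : Prop :=
  ∀ f : L2 ι, f ∈ hardy ι → Φ.mulLp f ∈ hardy ι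

/-- A matrix `H^∞` symbol is inner if `Θ(z)*Θ(z) = I` a.e. -/
def Symbol.IsInner (Φ : Symbol ι) : Prop :=
  Φ.MemHinf ∧ ∀ᵐ x ∂μ𝕋, (ContinuousLinearMap.adjoint (Φ.toFun x)).comp (Φ.toFun x) = 1

/-- The block Toeplitz operator `T_Φ = P (Φ ·)` on the vector Hardy space. -/
def toeplitz (Φ : Symbol ι) : H2 ι →L[ℂ] H2 ι :=
  (hardyProj ι).comp (Φ.mulLp.comp (hardy ι).subtypeL)

/-- The block Hankel operator `H_Φ = J P^⊥ (Φ ·)`, viewed as an operator from `H²` to `H²`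
(its image indeed lies in `H²`). -/
def hankel (Φ : Symbol ι) : H2 ι →L[ℂ] H2 ι :=
  (hardyProj ι).comp <|
    (Jop (V ι)).comp <|
      (ContinuousLinearMap.id ℂ (L2 ι) - (hardy ι).subtypeL.comp (hardyProj ι)).comp <|
        Φ.mulLp.comp (hardy ι).subtypeL

/-- The image `Θ · H²` of the Hardy space under multiplication by a symbol. -/
def Symbol.rangeH2 (Φ : Symbol ι) : Submodule ℂ (L2 ι) :=
  (hardy ι).map (Φ.mulLp : L2 ι →ₗ[ℂ] L2 ι)

/-- The model space `H(Θ) := H² ⊖ Θ H²`. -/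
def modelSpace (Θ : Symbol ι) : Submodule ℂ (L2 ι) :=
  hardy ι ⊓ (Θ.rangeH2)ᗮ

/-- A scalar-valued `L^∞` function on the circle. -/
structure SymbolS : Type where
  toFun : 𝕋 → ℂ
  meas : AEStronglyMeasurable toFun μ𝕋
  bound : ℝ
  le_bound : ∀ x, ‖toFun x‖ ≤ bound

instance : CoeFun SymbolS (fun _ => 𝕋 → ℂ) := ⟨SymbolS.toFun⟩

/-- Scalar symbols embed into matrix symbols as `φ I_n`. -/
def SymbolS.toMatrix (φ : SymbolS) (ι : Type) [Fintype ι] : Symbol ι where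
  toFun := fun x => φ.toFun x • (1 : V ι →L[ℂ] V ι)
  meas := φ.meas.smul aestronglyMeasurable_const
  bound := φ.bound
  le_bound := fun x => by
    have h0 : (0 : ℝ) ≤ φ.bound := le_trans (norm_nonneg _) (φ.le_bound 0)
    calc ‖φ.toFun x • (1 : V ι →L[ℂ] V ι)‖ ≤ ‖φ.toFun x‖ * ‖(1 : V ι →L[ℂ] V ι)‖ :=
          ContinuousLinearMap.opNorm_smul_le _ _
      _ ≤ φ.bound * 1 := by
          refine mul_le_mul (φ.le_bound x) ?_ (norm_nonneg _) h0
          rw [ContinuousLinearMap.one_def]; exact ContinuousLinearMap.norm_id_le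
      _ = φ.bound := mul_one _

/-- The scalar-valued `L²` space of the circle. -/
abbrev L2S : Type := Lp ℂ 2 μ𝕋

/-- The span of the negative trigonometric monomials. -/
def negSpanS : Submodule ℂ L2S :=
  Submodule.span ℂ {f | ∃ k : ℤ, k < 0 ∧ f = fourierLp 2 k}

/-- The scalar Hardy space `H²(𝕋)`. -/
def hardyS : Submodule ℂ L2S := negSpanSᗮ

/-- The scalar Hardy space as a Hilbert space. -/
abbrev H2S : Type := ↥hardyS

instance : CompleteSpace H2S := by unfold H2S hardyS; infer_instance

instance : HasOrthogonalProjection hardyS := by unfold hardyS; infer_instance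

/-- The Szegő (Riesz) projection `P : L² → H²`. -/
def hardyProjS : L2S →L[ℂ] H2S := orthogonalProjection hardyS

/-- Multiplication by a scalar `L^∞` function, as an operator on `L²(𝕋)`. -/
def SymbolS.mulLp (φ : SymbolS) : L2S →L[ℂ] L2S :=
  pointwiseCLM (fun x => φ.toFun x • (1 : ℂ →L[ℂ] ℂ))
    (φ.meas.smul aestronglyMeasurable_const)
    (C := φ.bound)
    (fun x => by
      calc ‖φ.toFun x • (1 : ℂ →L[ℂ] ℂ)‖ ≤ ‖φ.toFun x‖ * ‖(1 : ℂ →L[ℂ] ℂ)‖ :=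
            ContinuousLinearMap.opNorm_smul_le _ _
        _ = ‖φ.toFun x‖ := by rw [norm_one, mul_one]
        _ ≤ φ.bound := φ.le_bound x)

/-- The scalar Toeplitz operator `T_φ` on `H²`. -/
def toeplitzS (φ : SymbolS) : H2S →L[ℂ] H2S :=
  hardyProjS.comp (φ.mulLp.comp hardyS.subtypeL)

/-- The scalar Hankel operator `H_φ = J P^⊥ (φ ·)` on `H²`. -/
def hankelS (φ : SymbolS) : H2S →L[ℂ] H2S :=
  hardyProjS.comp <|
    (Jop ℂ).comp <|
      (ContinuousLinearMap.id ℂ L2S - hardyS.subtypeL.comp hardyProjS).comp <|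
        φ.mulLp.comp hardyS.subtypeL

/-- Pointwise product of scalar symbols. -/
def SymbolS.mul (φ ψ : SymbolS) : SymbolS where
  toFun := fun x => φ.toFun x * ψ.toFun x
  meas := φ.meas.mul ψ.meas
  bound := max φ.bound 0 * max ψ.bound 0
  le_bound := fun x => by
    rw [norm_mul]
    exact mul_le_mul ((φ.le_bound x).trans (le_max_left _ _))
      ((ψ.le_bound x).trans (le_max_left _ _)) (norm_nonneg _) (le_max_right _ _)

/-- The complex-conjugate symbol `φ̄`. -/
def SymbolS.conj (φ : SymbolS) : SymbolS where
  toFun := fun x => conj (φ.toFun x)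
  meas := Complex.continuous_conj.comp_aestronglyMeasurable φ.meas
  bound := φ.bound
  le_bound := fun x => le_trans (le_of_eq (RCLike.norm_conj _)) (φ.le_bound x)

/-- The reflected conjugate symbol `φ̃(z) := conj (φ(z̄))`. -/
def SymbolS.tilde (φ : SymbolS) : SymbolS where
  toFun := fun x => conj (φ.toFun (-x))
  meas := Complex.continuous_conj.comp_aestronglyMeasurable
    (φ.meas.comp_quasiMeasurePreserving
      (Measure.measurePreserving_neg μ𝕋).quasiMeasurePreserving)
  bound := φ.bound
  le_bound := fun x => le_trans (le_of_eq (RCLike.norm_conj _)) (φ.le_bound (-x))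

/-- A scalar symbol is in `H^∞` iff multiplication by it preserves `H²`. -/
def SymbolS.MemHinf (φ : SymbolS) : Prop :=
  ∀ f : L2S, f ∈ hardyS → φ.mulLp f ∈ hardyS

/-- A scalar inner function: an `H^∞` function which is unimodular a.e. on the circle. -/
def SymbolS.IsInner (φ : SymbolS) : Prop :=
  φ.MemHinf ∧ ∀ᵐ x ∂μ𝕋, ‖φ.toFun x‖ = 1

/-- The image `θ · H²` of the Hardy space under a scalar multiplication operator. -/
def SymbolS.rangeH2 (φ : SymbolS) : Submodule ℂ L2S :=
  hardyS.map (φ.mulLp : L2S →ₗ[ℂ] L2S)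

/-- The scalar model space `H(θ) = H² ⊖ θH²`. -/
def modelSpaceS (θ : SymbolS) : Submodule ℂ L2S :=
  hardyS ⊓ (θ.rangeH2)ᗮ

/-- The coordinate function `z` on the circle (i.e. `x ↦ e^{ix}`). -/
def circleCoord : 𝕋 → ℂ := fun x => fourier 1 x

/-- The symbol `z` of the unilateral shift. -/
def shiftSymbolS : SymbolS where
  toFun := circleCoord
  meas := (map_continuous (fourier 1)).aestronglyMeasurable
  bound := 1
  le_bound := fun x => le_of_eq (norm_fourier_apply 1 x)

/-- The symbol `z̄`. -/
def coshiftSymbolS : SymbolS where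
  toFun := fun x => fourier (-1) x
  meas := (map_continuous (fourier (-1))).aestronglyMeasurable
  bound := 1
  le_bound := fun x => le_of_eq (norm_fourier_apply (-1) x)

/-- An operator on a complex Hilbert space is hyponormal if its self-commutator
`[T*, T] = T*T - TT*` is a positive operator. -/
def Hyponormal {H : Type*} [NormedAddCommGroup H] [InnerProductSpace ℂ H] [CompleteSpace H]
    (T : H →L[ℂ] H) : Prop :=
  (ContinuousLinearMap.adjoint T ∘L T - T ∘L ContinuousLinearMap.adjoint T).IsPositive

/-- A Blaschke factor `b_a(z) = (z - a)/(1 - āz)`. -/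
def blaschke (a z : ℂ) : ℂ := (z - a) / (1 - conj a * z)

end BlockToeplitz

namespace BlockToeplitz
open scoped ComplexConjugate

/-- A bounded measurable function lies in `L²` of the circle. -/
theorem SymbolS.memLp2 (φ : SymbolS) : MemLp φ.toFun 2 μ𝕋 :=
  MemLp.mono_exponent (memLp_top_of_bound φ.meas φ.bound
    (Filter.Eventually.of_forall φ.le_bound)) le_top

/-- An `L^∞` function `d` divides `f` in `H²` if `f = d·g` for some `g ∈ H²`. -/
def DividesH2 (d : SymbolS) (f : 𝕋 → ℂ) : Prop :=
  ∃ (g : 𝕋 → ℂ) (hg : MemLp g 2 μ𝕋), hg.toLp g ∈ hardyS ∧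
    ∀ᵐ x ∂μ𝕋, f x = d.toFun x * g x

/-- An inner function `θ` and a function `f ∈ H²` are coprime if their only common inner
divisor is a constant. -/
def CoprimeH2 (θ : SymbolS) (f : 𝕋 → ℂ) : Prop :=
  ∀ d : SymbolS, d.IsInner → DividesH2 d f → DividesH2 d θ.toFun →
    ∃ c : ℂ, ∀ᵐ x ∂μ𝕋, d.toFun x = c

end BlockToeplitz

namespace BlockToeplitz
open scoped ComplexConjugate

local notation "⟪" x ", " y "⟫" => @inner ℂ _ _ x y

/-- The monomial `z^k` as an element of `L²`. -/
def ek (k : ℤ) : L2S := fourierLp 2 k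

theorem coeFn_ek (k : ℤ) : (ek k : 𝕋 → ℂ) =ᵐ[μ𝕋] fun x => fourier k x :=
  coeFn_fourierLp 2 k

theorem norm_ek (k : ℤ) : ‖ek k‖ = 1 := orthonormal_fourier.1 k

/-- The k-th Fourier coefficient of `g ∈ L²`. -/
def coef (g : L2S) (k : ℤ) : ℂ := ⟪ek k, g⟫

theorem coef_add (g h : L2S) (k : ℤ) : coef (g + h) k = coef g k + coef h k :=
  inner_add_right _ _ _

theorem coef_smul (c : ℂ) (g : L2S) (k : ℤ) : coef (c • g) k = c * coef g k :=
  inner_smul_right _ _ _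

theorem coef_sub (g h : L2S) (k : ℤ) : coef (g - h) k = coef g k - coef h k :=
  inner_sub_right _ _ _

theorem norm_coef_le (g : L2S) (k : ℤ) : ‖coef g k‖ ≤ ‖g‖ := by
  have := norm_inner_le_norm (𝕜 := ℂ) (ek k) g
  rwa [norm_ek, one_mul] at this

theorem coef_ek (j k : ℤ) : coef (ek j) k = if k = j then 1 else 0 := by
  have := orthonormal_iff_ite.mp (orthonormal_fourier (T := 2 * π)) k j
  exact this

theorem mem_hardyS_iff (g : L2S) : g ∈ hardyS ↔ ∀ k < 0, coef g k = 0 := by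
  constructor
  · intro hg k hk
    exact (Submodule.mem_orthogonal _ g).mp hg (ek k) (Submodule.subset_span ⟨k, hk, rfl⟩)
  · intro h
    rw [hardyS, Submodule.mem_orthogonal]
    intro u hu
    refine Submodule.span_induction ?_ ?_ ?_ ?_ hu
    · rintro f ⟨k, hk, rfl⟩
      exact h k hk
    · exact inner_zero_left g
    · intro x y _ _ hx hy
      rw [inner_add_left, hx, hy, add_zero]
    · intro c x _ hx
      rw [inner_smul_left, hx, mul_zero]

theorem ek_mem_hardyS {k : ℤ} (hk : 0 ≤ k) : ek k ∈ hardyS := by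
  rw [mem_hardyS_iff]
  intro j hj
  rw [coef_ek, if_neg (by omega)]

theorem inner_eq_tsum_coef (w f : L2S) :
    ⟪w, f⟫ = ∑' j : ℤ, conj (coef w j) * coef f j := by
  rw [← HilbertBasis.tsum_inner_mul_inner (fourierBasis (T := 2 * π)) w f]
  refine tsum_congr fun j => ?_
  have hbj : (fourierBasis (T := 2 * π)) j = ek j := congrFun coe_fourierBasis j
  rw [hbj, coef, coef, ← inner_conj_symm]

theorem inner_eq_zero_of_coef (w f : L2S) (h : ∀ j, coef w j = 0 ∨ coef f j = 0) :
    ⟪w, f⟫ = 0 := by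
  rw [inner_eq_tsum_coef]
  have : ∀ j : ℤ, conj (coef w j) * coef f j = 0 := by
    intro j
    rcases h j with h' | h' <;> simp [h']
  simp [this]

theorem inner_eq_integral (f g : L2S) : ⟪f, g⟫ = ∫ x, conj (f x) * g x ∂μ𝕋 := by
  rw [MeasureTheory.L2.inner_def]
  simp only [RCLike.inner_apply']

theorem coef_eq_integral (g : L2S) (k : ℤ) :
    coef g k = ∫ x, conj (fourier k x) * g x ∂μ𝕋 := by
  rw [coef, inner_eq_integral]
  refine integral_congr_ae ?_
  filter_upwards [coeFn_ek k] with x hx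
  rw [hx]

theorem coef_toLp {f : 𝕋 → ℂ} (hf : MemLp f 2 μ𝕋) (k : ℤ) :
    coef (hf.toLp f) k = ∫ x, conj (fourier k x) * f x ∂μ𝕋 := by
  rw [coef_eq_integral]
  refine integral_congr_ae ?_
  filter_upwards [hf.coeFn_toLp] with x hx
  rw [hx]

theorem mulLp_coeFn (ψ : SymbolS) (f : L2S) :
    (ψ.mulLp f : 𝕋 → ℂ) =ᵐ[μ𝕋] fun x => ψ x * f x := by
  have h : ∀ (hmem : MemLp (fun x => (ψ x • (1 : ℂ →L[ℂ] ℂ)) (f x)) 2 μ𝕋),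
      (hmem.toLp _ : 𝕋 → ℂ) =ᵐ[μ𝕋] fun x => ψ x * f x := by
    intro hmem
    filter_upwards [hmem.coeFn_toLp] with x hx
    rw [hx]; simp
  exact h (memLp_pointwise (ψ.meas.smul aestronglyMeasurable_const) (fun x => by
    calc ‖ψ.toFun x • (1 : ℂ →L[ℂ] ℂ)‖ ≤ ‖ψ.toFun x‖ * ‖(1 : ℂ →L[ℂ] ℂ)‖ :=
          ContinuousLinearMap.opNorm_smul_le _ _
      _ = ‖ψ.toFun x‖ := by rw [norm_one, mul_one]
      _ ≤ ψ.bound := ψ.le_bound x) f)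

theorem norm_le_of_coeFn_le (v g : L2S) {c : ℝ} (hc : 0 ≤ c)
    (h : ∀ᵐ x ∂μ𝕋, ‖v x‖ ≤ c * ‖g x‖) : ‖v‖ ≤ c * ‖g‖ := by
  rw [Lp.norm_def, Lp.norm_def]
  have hb : eLpNorm (v : 𝕋 → ℂ) 2 μ𝕋 ≤ ENNReal.ofReal c * eLpNorm (g : 𝕋 → ℂ) 2 μ𝕋 :=
    eLpNorm_le_mul_eLpNorm_of_ae_le_mul h 2
  calc (eLpNorm (v : 𝕋 → ℂ) 2 μ𝕋).toReal
      ≤ (ENNReal.ofReal c * eLpNorm (g : 𝕋 → ℂ) 2 μ𝕋).toReal :=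
        ENNReal.toReal_mono (ENNReal.mul_ne_top ENNReal.ofReal_ne_top (Lp.eLpNorm_ne_top g)) hb
    _ = c * (eLpNorm (g : 𝕋 → ℂ) 2 μ𝕋).toReal := by
        rw [ENNReal.toReal_mul, ENNReal.toReal_ofReal hc]

theorem norm_eq_of_coeFn_norm_eq (v w : L2S) (h : ∀ᵐ x ∂μ𝕋, ‖v x‖ = ‖w x‖) : ‖v‖ = ‖w‖ := by
  rw [Lp.norm_def, Lp.norm_def, eLpNorm_congr_norm_ae h]

end BlockToeplitz

namespace BlockToeplitz
open scoped ComplexConjugate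

local notation "⟪" x ", " y "⟫" => @inner ℂ _ _ x y

theorem memLp_conj {f : 𝕋 → ℂ} (hf : MemLp f 2 μ𝕋) :
    MemLp (fun x => conj (f x)) 2 μ𝕋 := by
  refine MemLp.of_le_mul (c := 1) hf
    (Complex.continuous_conj.comp_aestronglyMeasurable hf.aestronglyMeasurable) ?_
  refine Filter.Eventually.of_forall fun x => ?_
  rw [RCLike.norm_conj, one_mul]

theorem memLp_bdd_mul {f g : 𝕋 → ℂ} (hf : MemLp f 2 μ𝕋)
    (hg : AEStronglyMeasurable g μ𝕋) {C : ℝ} (hC : ∀ x, ‖g x‖ ≤ C) :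
    MemLp (fun x => g x * f x) 2 μ𝕋 := by
  refine MemLp.of_le_mul (c := C) hf (hg.mul hf.aestronglyMeasurable) ?_
  refine Filter.Eventually.of_forall fun x => ?_
  rw [norm_mul]
  exact mul_le_mul_of_nonneg_right (hC x) (norm_nonneg _)

theorem memLp_fourier_mul {f : 𝕋 → ℂ} (hf : MemLp f 2 μ𝕋) (n : ℤ) :
    MemLp (fun x => fourier n x * f x) 2 μ𝕋 :=
  memLp_bdd_mul hf (map_continuous (fourier n)).aestronglyMeasurable (C := 1)
    (fun x => le_of_eq (norm_fourier_apply n x))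

theorem integrable_L2_mul (f g : L2S) : Integrable (fun x => f x * g x) μ𝕋 := by
  have h := MeasureTheory.L2.integrable_inner (𝕜 := ℂ)
    ((memLp_conj (Lp.memLp f)).toLp _) g
  refine h.congr ?_
  filter_upwards [MemLp.coeFn_toLp (memLp_conj (Lp.memLp f))] with x hx
  rw [RCLike.inner_apply']
  rw [hx]
  simp

theorem inner_proj_left (w : L2S) (y : H2S) :
    ⟪(hardyProjS w : L2S), (y : L2S)⟫ = ⟪w, (y : L2S)⟫ := by
  rw [show (hardyProjS w : L2S) = (orthogonalProjection hardyS w : L2S) from rfl]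
  rw [← starProjection_apply, inner_starProjection_left_eq_right, starProjection_apply]
  rw [orthogonalProjection_mem_subspace_eq_self]

theorem inner_proj_right (w : L2S) (x : H2S) :
    ⟪(x : L2S), (hardyProjS w : L2S)⟫ = ⟪(x : L2S), w⟫ := by
  rw [← inner_conj_symm, inner_proj_left, inner_conj_symm]

/-- The adjoint of `T_φ` is `T_φ̄`. -/
theorem adjoint_toeplitzS (φ : SymbolS) :
    ContinuousLinearMap.adjoint (toeplitzS φ) = toeplitzS φ.conj := by
  symm
  rw [ContinuousLinearMap.eq_adjoint_iff]
  intro x y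
  have key : ∀ (u v : L2S), ⟪φ.conj.mulLp u, v⟫ = ⟪u, φ.mulLp v⟫ := by
    intro u v
    rw [inner_eq_integral, inner_eq_integral]
    refine integral_congr_ae ?_
    filter_upwards [mulLp_coeFn φ.conj u, mulLp_coeFn φ v] with x h1 h2
    rw [h1, h2]
    show conj (conj (φ x) * u x) * v x = conj (u x) * (φ x * v x)
    rw [map_mul, Complex.conj_conj]
    ring
  show ⟪(hardyProjS (φ.conj.mulLp ↑x) : L2S), (y : L2S)⟫
      = ⟪(x : L2S), (hardyProjS (φ.mulLp ↑y) : L2S)⟫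
  rw [inner_proj_left, inner_proj_right, key]

/-- The key consequence of hyponormality: if `f ∈ H²` and `φ̄ f ∈ H²` then `φ f ∈ H²`. -/
theorem hypo_key {φ : SymbolS} (hyp : Hyponormal (toeplitzS φ)) (u : L2S)
    (hu : u ∈ hardyS) (hG : φ.conj.mulLp u ∈ hardyS) : φ.mulLp u ∈ hardyS := by
  set T := toeplitzS φ with hT
  set f : H2S := ⟨u, hu⟩ with hf
  have hpos : (0:ℝ) ≤ RCLike.re
      ⟪((ContinuousLinearMap.adjoint T ∘L T) - T ∘L ContinuousLinearMap.adjoint T) f, f⟫ :=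
    hyp.2 f
  rw [ContinuousLinearMap.sub_apply, inner_sub_left, ContinuousLinearMap.comp_apply,
    ContinuousLinearMap.comp_apply, ContinuousLinearMap.adjoint_inner_left, map_sub,
    inner_self_eq_norm_sq, ← ContinuousLinearMap.adjoint_inner_right,
    inner_self_eq_norm_sq] at hpos
  have hle : ‖ContinuousLinearMap.adjoint T f‖ ≤ ‖T f‖ := by
    nlinarith [norm_nonneg (T f), norm_nonneg (ContinuousLinearMap.adjoint T f)]
  rw [hT, adjoint_toeplitzS] at hle
  set F : L2S := φ.mulLp u with hF
  set G : L2S := φ.conj.mulLp u with hGdef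
  have hTstar : toeplitzS φ.conj f = ⟨G, hG⟩ := by
    apply Subtype.ext
    show (hardyProjS (φ.conj.mulLp ↑f) : L2S) = G
    exact (starProjection_eq_self_iff (K := hardyS)).mpr hG
  have hnormG : ‖G‖ ≤ ‖(hardyProjS F : L2S)‖ := by
    have h1 : ‖toeplitzS φ.conj f‖ = ‖G‖ := by rw [hTstar]; rfl
    have h2 : ‖toeplitzS φ f‖ = ‖(hardyProjS F : L2S)‖ := rfl
    rw [h1, h2] at hle
    exact hle
  have hFG : ‖F‖ = ‖G‖ := by
    refine norm_eq_of_coeFn_norm_eq F G ?_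
    filter_upwards [mulLp_coeFn φ u, mulLp_coeFn φ.conj u] with x h1 h2
    rw [h1, h2]
    show ‖φ x * u x‖ = ‖conj (φ x) * u x‖
    rw [norm_mul, norm_mul, RCLike.norm_conj]
  have hsplit : F = (hardyProjS F : L2S) + (F - (hardyProjS F : L2S)) := by abel
  have hinner : ⟪(hardyProjS F : L2S), F - (hardyProjS F : L2S)⟫ = 0 := by
    have hmem : F - (hardyProjS F : L2S) ∈ hardySᗮ :=
      sub_starProjection_mem_orthogonal (K := hardyS) F
    exact (Submodule.mem_orthogonal _ _).mp hmem _ (hardyProjS F).2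
  have hpyth : ‖F‖ * ‖F‖ = ‖(hardyProjS F : L2S)‖ * ‖(hardyProjS F : L2S)‖
      + ‖F - (hardyProjS F : L2S)‖ * ‖F - (hardyProjS F : L2S)‖ := by
    conv_lhs => rw [hsplit]
    exact norm_add_sq_eq_norm_sq_add_norm_sq_of_inner_eq_zero _ _ hinner
  have hz2 : ‖F - (hardyProjS F : L2S)‖ * ‖F - (hardyProjS F : L2S)‖ ≤ 0 := by
    nlinarith [hnormG, hFG, hpyth, norm_nonneg F, norm_nonneg (hardyProjS F : L2S)]
  have hzero : F - (hardyProjS F : L2S) = 0 :=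
    norm_eq_zero.mp (mul_self_eq_zero.mp (le_antisymm hz2 (mul_self_nonneg _)))
  have hFeq : F = (hardyProjS F : L2S) := by
    have := sub_eq_zero.mp hzero
    exact this
  rw [hFeq]
  exact (hardyProjS F).2

/-- The symbol `z^n`. -/
def eSym (n : ℤ) : SymbolS where
  toFun := fun x => fourier n x
  meas := (map_continuous (fourier n)).aestronglyMeasurable
  bound := 1
  le_bound := fun x => le_of_eq (norm_fourier_apply n x)

theorem coef_eSym_mulLp (n : ℤ) (f : L2S) (k : ℤ) :
    coef ((eSym n).mulLp f) k = coef f (k - n) := by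
  rw [coef_eq_integral, coef_eq_integral]
  refine integral_congr_ae ?_
  filter_upwards [mulLp_coeFn (eSym n) f] with x hx
  rw [hx]
  show conj (fourier k x) * (fourier n x * f x) = conj (fourier (k - n) x) * f x
  rw [← fourier_neg, ← fourier_neg, ← mul_assoc, ← fourier_add,
    show -k + n = -(k - n) by ring]

theorem eSym_mulLp_mem_hardyS {n : ℤ} (hn : 0 ≤ n) {f : L2S} (hf : f ∈ hardyS) :
    (eSym n).mulLp f ∈ hardyS := by
  rw [mem_hardyS_iff]
  intro k hk
  rw [coef_eSym_mulLp]
  exact (mem_hardyS_iff f).mp hf _ (by omega)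

theorem ana1 (U V : L2S) (hU : ∀ j < 0, coef U j = 0) (hV : V ∈ hardyS) {k : ℤ} (hk : k < 0) :
    ∫ x, conj (fourier k x) * (U x * V x) ∂μ𝕋 = 0 := by
  have hWmem : MemLp (fun x => fourier k x * conj (U x)) 2 μ𝕋 :=
    memLp_fourier_mul (memLp_conj (Lp.memLp U)) k
  set W : L2S := hWmem.toLp _ with hW
  have hcoefW : ∀ j : ℤ, coef W j = conj (coef U (k - j)) := by
    intro j
    rw [coef_toLp, coef_eq_integral, ← integral_conj]
    refine integral_congr_ae (Filter.Eventually.of_forall fun x => ?_)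
    show conj (fourier j x) * (fourier k x * conj (U x))
        = conj (conj (fourier (k - j) x) * U x)
    rw [map_mul, Complex.conj_conj, ← fourier_neg, ← mul_assoc, ← fourier_add,
      show -j + k = k - j by ring]
  have hWV : ⟪W, V⟫ = 0 := by
    refine inner_eq_zero_of_coef W V fun j => ?_
    by_cases hj : j ≤ k
    · exact Or.inr ((mem_hardyS_iff V).mp hV j (by omega))
    · refine Or.inl ?_
      rw [hcoefW j, hU (k - j) (by omega), map_zero]
  rw [inner_eq_integral] at hWV
  rw [← hWV]
  refine integral_congr_ae ?_
  filter_upwards [hWmem.coeFn_toLp] with x hx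
  rw [hx]
  show conj (fourier k x) * (U x * V x) = conj (fourier k x * conj (U x)) * V x
  rw [map_mul, Complex.conj_conj]
  ring

theorem ana2 (Z V : L2S) (hZ : ∀ j : ℤ, 0 ≤ j → coef Z j = 0) (hV : V ∈ hardyS)
    {k : ℤ} (hk : k < 0) :
    ∫ x, conj (fourier k x) * (conj (Z x) * V x) ∂μ𝕋 = 0 := by
  have hWmem : MemLp (fun x => fourier k x * Z x) 2 μ𝕋 :=
    memLp_fourier_mul (Lp.memLp Z) k
  set W : L2S := hWmem.toLp _ with hW
  have hcoefW : ∀ j : ℤ, coef W j = coef Z (j - k) := by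
    intro j
    rw [coef_toLp, coef_eq_integral]
    refine integral_congr_ae (Filter.Eventually.of_forall fun x => ?_)
    show conj (fourier j x) * (fourier k x * Z x) = conj (fourier (j - k) x) * Z x
    rw [← fourier_neg, ← fourier_neg, ← mul_assoc, ← fourier_add,
      show -j + k = -(j - k) by ring]
  have hWV : ⟪W, V⟫ = 0 := by
    refine inner_eq_zero_of_coef W V fun j => ?_
    by_cases hj : k ≤ j
    · exact Or.inl (by rw [hcoefW j]; exact hZ _ (by omega))
    · exact Or.inr ((mem_hardyS_iff V).mp hV j (by omega))
  rw [inner_eq_integral] at hWV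
  rw [← hWV]
  refine integral_congr_ae ?_
  filter_upwards [hWmem.coeFn_toLp] with x hx
  rw [hx]
  show conj (fourier k x) * (conj (Z x) * V x) = conj (fourier k x * Z x) * V x
  rw [map_mul]
  ring

end BlockToeplitz

namespace BlockToeplitz
open scoped ComplexConjugate
open Filter Topology

local notation "⟪" x ", " y "⟫" => @inner ℂ _ _ x y

/-- Evaluation of (the analytic part of) an `L²` function at an interior point `α`. -/
def Eval (α : ℂ) (u : L2S) : ℂ := ∑' n : ℕ, α ^ n * coef u (n : ℤ)

theorem eval_summable_aux {α : ℂ} (hα : ‖α‖ < 1) (u : L2S) (g : ℕ → ℤ) :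
    Summable (fun n : ℕ => α ^ n * coef u (g n)) := by
  refine Summable.of_norm ?_
  refine Summable.of_nonneg_of_le (fun n => norm_nonneg _)
    (fun n => ?_) ((summable_geometric_of_lt_one (norm_nonneg α) hα).mul_right ‖u‖)
  rw [norm_mul, norm_pow]
  exact mul_le_mul_of_nonneg_left (norm_coef_le u (g n)) (by positivity)

theorem eval_summable {α : ℂ} (hα : ‖α‖ < 1) (u : L2S) :
    Summable (fun n : ℕ => α ^ n * coef u (n : ℤ)) :=
  eval_summable_aux hα u _

theorem coef_zero' (k : ℤ) : coef (0 : L2S) k = 0 := inner_zero_right _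

theorem eval_zero (α : ℂ) : Eval α (0 : L2S) = 0 := by
  simp [Eval, coef_zero']

theorem eval_add {α : ℂ} (hα : ‖α‖ < 1) (u v : L2S) :
    Eval α (u + v) = Eval α u + Eval α v := by
  rw [Eval, Eval, Eval, ← Summable.tsum_add (eval_summable hα u) (eval_summable hα v)]
  refine tsum_congr fun n => ?_
  rw [coef_add]
  ring

theorem eval_smul (α : ℂ) (c : ℂ) (u : L2S) : Eval α (c • u) = c * Eval α u := by
  rw [Eval, Eval, ← tsum_mul_left]
  refine tsum_congr fun n => ?_
  rw [coef_smul]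
  ring

theorem eval_sub {α : ℂ} (hα : ‖α‖ < 1) (u v : L2S) :
    Eval α (u - v) = Eval α u - Eval α v := by
  have h := eval_add hα v (u - v)
  have h2 : v + (u - v) = u := by abel
  rw [h2] at h
  rw [h]
  ring

theorem norm_eval_le {α : ℂ} (hα : ‖α‖ < 1) (u : L2S) :
    ‖Eval α u‖ ≤ (1 - ‖α‖)⁻¹ * ‖u‖ := by
  refine tsum_of_norm_bounded
    ((hasSum_geometric_of_lt_one (norm_nonneg α) hα).mul_right ‖u‖) fun n => ?_
  rw [norm_mul, norm_pow]
  exact mul_le_mul_of_nonneg_left (norm_coef_le u _) (by positivity)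

theorem lipschitz_tendsto {F : L2S → ℂ} {C : ℝ}
    (hF : ∀ u v : L2S, ‖F u - F v‖ ≤ C * ‖u - v‖) {g : ℕ → L2S} {L : L2S}
    (hg : Tendsto g atTop (𝓝 L)) : Tendsto (fun n => F (g n)) atTop (𝓝 (F L)) := by
  rw [tendsto_iff_norm_sub_tendsto_zero]
  have hgz : Tendsto (fun n => ‖g n - L‖) atTop (𝓝 (0 : ℝ)) := by
    rw [← tendsto_iff_norm_sub_tendsto_zero]
    exact hg
  refine squeeze_zero (fun n => norm_nonneg _) (fun n => hF _ _) ?_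
  have := hgz.const_mul C
  simpa using this

theorem eval_tendsto {α : ℂ} (hα : ‖α‖ < 1) {g : ℕ → L2S} {L : L2S}
    (hg : Tendsto g atTop (𝓝 L)) :
    Tendsto (fun n => Eval α (g n)) atTop (𝓝 (Eval α L)) := by
  refine lipschitz_tendsto (C := (1 - ‖α‖)⁻¹) (fun u v => ?_) hg
  rw [← eval_sub hα]
  exact norm_eval_le hα _

theorem coef_tendsto {g : ℕ → L2S} {L : L2S} (hg : Tendsto g atTop (𝓝 L)) (k : ℤ) :
    Tendsto (fun n => coef (g n) k) atTop (𝓝 (coef L k)) := by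
  refine lipschitz_tendsto (C := 1) (fun u v => ?_) hg
  show ‖coef u k - coef v k‖ ≤ 1 * ‖u - v‖
  rw [← coef_sub, one_mul]
  exact norm_coef_le _ _

theorem eval_shift {α : ℂ} (hα : ‖α‖ < 1) {u : L2S} (hu : u ∈ hardyS) (n : ℕ) :
    Eval α ((eSym (n : ℤ)).mulLp u) = α ^ n * Eval α u := by
  simp only [Eval]
  rw [← tsum_mul_left]
  have h1 : ∀ m : ℕ, α ^ m * coef ((eSym (n : ℤ)).mulLp u) (m : ℤ)
      = α ^ m * coef u ((m : ℤ) - n) := by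
    intro m; rw [coef_eSym_mulLp]
  rw [tsum_congr h1]
  have key : ∑' j : ℕ, (fun m : ℕ => α ^ m * coef u ((m : ℤ) - n)) (j + n)
      = ∑' m : ℕ, α ^ m * coef u ((m : ℤ) - n) := by
    have hsupp : Function.support (fun m : ℕ => α ^ m * coef u ((m : ℤ) - n))
        ⊆ Set.range (fun j : ℕ => j + n) := by
      intro m hm
      rw [Function.mem_support] at hm
      rcases lt_or_ge m n with h | h
      · exfalso
        apply hm
        have hmn : (m : ℤ) - n < 0 := by omega
        rw [(mem_hardyS_iff u).mp hu _ hmn, mul_zero]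
      · exact ⟨m - n, by show m - n + n = m; omega⟩
    exact Function.Injective.tsum_eq (add_left_injective n) hsupp
  rw [← key]
  refine tsum_congr fun j => ?_
  show α ^ (j + n) * coef u (((j + n : ℕ) : ℤ) - n) = α ^ n * (α ^ j * coef u (j : ℤ))
  have h2 : ((j + n : ℕ) : ℤ) - n = j := by push_cast; ring
  rw [h2, pow_add]
  ring

theorem tsum_coef_shift {α : ℂ} (hα : ‖α‖ < 1) {u : L2S} (hu : u ∈ hardyS) {k : ℤ}
    (hk : k ≤ 0) :
    ∑' n : ℕ, α ^ n * coef u (k + n) = α ^ ((-k).toNat) * Eval α u := by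
  set t := (-k).toNat with ht
  have key : ∑' j : ℕ, (fun n : ℕ => α ^ n * coef u (k + n)) (j + t)
      = ∑' n : ℕ, α ^ n * coef u (k + n) := by
    have hsupp : Function.support (fun n : ℕ => α ^ n * coef u (k + n))
        ⊆ Set.range (fun j : ℕ => j + t) := by
      intro m hm
      rw [Function.mem_support] at hm
      rcases lt_or_ge m t with h | h
      · exfalso
        apply hm
        have hmn : k + (m : ℤ) < 0 := by omega
        rw [(mem_hardyS_iff u).mp hu _ hmn, mul_zero]
      · exact ⟨m - t, by show m - t + t = m; omega⟩
    exact Function.Injective.tsum_eq (add_left_injective t) hsupp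
  rw [← key]
  simp only [Eval]
  rw [← tsum_mul_left]
  refine tsum_congr fun j => ?_
  show α ^ (j + t) * coef u (k + ((j + t : ℕ) : ℤ)) = α ^ t * (α ^ j * coef u (j : ℤ))
  have h2 : k + ((j + t : ℕ) : ℤ) = (j : ℤ) := by push_cast; omega
  rw [h2, pow_add]
  ring

/- ### Blaschke factors -/

theorem norm_circleCoord (x : 𝕋) : ‖circleCoord x‖ = 1 := norm_fourier_apply 1 x

theorem blaschke_denom_ne_zero {w z : ℂ} (h : ‖w‖ * ‖z‖ < 1) : 1 - conj w * z ≠ 0 := by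
  intro hc
  have h1 : conj w * z = 1 := by linear_combination -hc
  have hn : ‖conj w * z‖ = 1 := by rw [h1, norm_one]
  rw [norm_mul, RCLike.norm_conj] at hn
  linarith

theorem norm_blaschke {w z : ℂ} (hw : ‖w‖ < 1) (hz : ‖z‖ = 1) : ‖blaschke w z‖ = 1 := by
  have hd : 1 - conj w * z ≠ 0 := blaschke_denom_ne_zero (by rw [hz, mul_one]; exact hw)
  have hzz : z * conj z = 1 := by
    rw [Complex.mul_conj]
    norm_cast
    rw [Complex.normSq_eq_norm_sq]
    rw [hz, one_pow]
  have key : z * conj (z - w) = 1 - conj w * z := by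
    rw [map_sub, mul_sub, hzz]
    ring
  have h2 : ‖1 - conj w * z‖ = ‖z - w‖ := by
    rw [← key, norm_mul, hz, one_mul, RCLike.norm_conj]
  have h3 : ‖z - w‖ ≠ 0 := by
    rw [← h2]
    exact norm_ne_zero_iff.mpr hd
  rw [blaschke, norm_div, h2, div_self h3]

theorem blaschke_self (a : ℂ) : blaschke a a = 0 := by
  rw [blaschke, sub_self, zero_div]

theorem blaschke_eq_zero_iff {a z : ℂ} (hd : 1 - conj a * z ≠ 0) :
    blaschke a z = 0 ↔ z = a := by
  rw [blaschke, div_eq_zero_iff]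
  constructor
  · rintro (h | h)
    · exact sub_eq_zero.mp h
    · exact absurd h hd
  · intro h
    exact Or.inl (by rw [h, sub_self])

theorem blaschke_partial_identity {w z : ℂ} (hw : ‖w‖ < 1) (hz : ‖z‖ = 1) (N : ℕ) :
    blaschke w z - (z - w) * (∑ n ∈ Finset.range N, (conj w * z) ^ n)
      = blaschke w z * (conj w * z) ^ N := by
  have hd : 1 - conj w * z ≠ 0 := blaschke_denom_ne_zero (by rw [hz, mul_one]; exact hw)
  have hne : conj w * z ≠ 1 := by
    intro hc
    exact hd (by rw [hc, sub_self])
  set r : ℂ := conj w * z with hr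
  have hb : blaschke w z * (1 - r) = z - w := div_mul_cancel₀ _ hd
  have hS : (∑ n ∈ Finset.range N, r ^ n) * (1 - r) = 1 - r ^ N := by
    have hgs := geom_sum_mul r N
    linear_combination -hgs
  refine mul_right_cancel₀ hd ?_
  calc (blaschke w z - (z - w) * ∑ n ∈ Finset.range N, r ^ n) * (1 - r)
      = blaschke w z * (1 - r) - (z - w) * ((∑ n ∈ Finset.range N, r ^ n) * (1 - r)) := by ring
    _ = (z - w) - (z - w) * (1 - r ^ N) := by rw [hb, hS]
    _ = (z - w) * r ^ N := by ring
    _ = blaschke w z * (1 - r) * r ^ N := by rw [hb]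
    _ = blaschke w z * r ^ N * (1 - r) := by ring

theorem continuous_blaschke_comp {w : ℂ} (hw : ‖w‖ < 1) :
    Continuous fun x : 𝕋 => blaschke w (circleCoord x) := by
  unfold blaschke circleCoord
  refine Continuous.div ?_ ?_ ?_
  · exact (map_continuous (fourier 1)).sub continuous_const
  · exact continuous_const.sub (continuous_const.mul (map_continuous (fourier 1)))
  · intro x
    refine blaschke_denom_ne_zero ?_
    rw [norm_fourier_apply, mul_one]
    exact hw

/-- A Blaschke factor as a symbol on the circle. -/
def bSym {w : ℂ} (hw : ‖w‖ < 1) : SymbolS where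
  toFun := fun x => blaschke w (circleCoord x)
  meas := (continuous_blaschke_comp hw).aestronglyMeasurable
  bound := 1
  le_bound := fun x => le_of_eq (norm_blaschke hw (norm_circleCoord x))

theorem fourier_natCast_pow (n : ℕ) (x : 𝕋) : fourier (n : ℤ) x = circleCoord x ^ n := by
  induction n with
  | zero =>
    rw [Nat.cast_zero, pow_zero]
    exact fourier_zero
  | succ n ih =>
    have h : ((n + 1 : ℕ) : ℤ) = (n : ℤ) + 1 := by push_cast; ring
    rw [h, fourier_add, ih, pow_succ]
    rfl

/-- Partial sums for multiplication by a Blaschke factor. -/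
def bPartial (w : ℂ) (u : L2S) (N : ℕ) : L2S :=
  ∑ n ∈ Finset.range N,
    (conj w) ^ n • ((eSym ((n : ℤ) + 1)).mulLp u - w • (eSym (n : ℤ)).mulLp u)

theorem bPartial_succ (w : ℂ) (u : L2S) (N : ℕ) :
    bPartial w u (N + 1) = bPartial w u N
      + (conj w) ^ N • ((eSym ((N : ℤ) + 1)).mulLp u - w • (eSym (N : ℤ)).mulLp u) :=
  Finset.sum_range_succ _ N

theorem bPartial_coeFn (w : ℂ) (u : L2S) (N : ℕ) :
    (bPartial w u N : 𝕋 → ℂ) =ᵐ[μ𝕋]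
      fun x => ((circleCoord x - w) * ∑ n ∈ Finset.range N, (conj w * circleCoord x) ^ n)
        * u x := by
  induction N with
  | zero =>
    have h0 : bPartial w u 0 = 0 := by
      rw [bPartial, Finset.range_zero, Finset.sum_empty]
    rw [h0]
    filter_upwards [Lp.coeFn_zero ℂ 2 μ𝕋] with x hx
    rw [hx]
    simp
  | succ N ih =>
    rw [bPartial_succ]
    set term : L2S :=
      (conj w) ^ N • ((eSym ((N : ℤ) + 1)).mulLp u - w • (eSym (N : ℤ)).mulLp u) with hterm
    filter_upwards [Lp.coeFn_add (bPartial w u N) term, ih,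
      Lp.coeFn_smul ((conj w) ^ N) ((eSym ((N : ℤ) + 1)).mulLp u - w • (eSym (N : ℤ)).mulLp u),
      Lp.coeFn_sub ((eSym ((N : ℤ) + 1)).mulLp u) (w • (eSym (N : ℤ)).mulLp u),
      Lp.coeFn_smul w ((eSym (N : ℤ)).mulLp u),
      mulLp_coeFn (eSym ((N : ℤ) + 1)) u, mulLp_coeFn (eSym (N : ℤ)) u]
      with x h1 h2 h3 h4 h5 h6 h7
    rw [h1, Pi.add_apply, h2, h3, Pi.smul_apply, h4, Pi.sub_apply, h5, Pi.smul_apply, h6, h7]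
    have hp1 : (eSym ((N : ℤ) + 1)).toFun x = circleCoord x ^ (N + 1) := by
      show fourier ((N : ℤ) + 1) x = _
      rw [show ((N : ℤ) + 1) = ((N + 1 : ℕ) : ℤ) by push_cast; ring, fourier_natCast_pow]
    have hp2 : (eSym (N : ℤ)).toFun x = circleCoord x ^ N := fourier_natCast_pow N x
    rw [Finset.sum_range_succ]
    show _ + (conj w) ^ N • ((eSym ((N : ℤ) + 1)).toFun x * u x
        - w • ((eSym (N : ℤ)).toFun x * u x)) = _
    rw [hp1, hp2, smul_eq_mul, smul_eq_mul]
    ring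

theorem bPartial_mem_hardy (w : ℂ) {u : L2S} (hu : u ∈ hardyS) (N : ℕ) :
    bPartial w u N ∈ hardyS := by
  refine Submodule.sum_mem _ fun n _ => Submodule.smul_mem _ _ ?_
  refine Submodule.sub_mem _ ?_ (Submodule.smul_mem _ _ ?_)
  · exact eSym_mulLp_mem_hardyS (by omega) hu
  · exact eSym_mulLp_mem_hardyS (by omega) hu

theorem bPartial_tendsto {w : ℂ} (hw : ‖w‖ < 1) (u : L2S) :
    Tendsto (bPartial w u) atTop (𝓝 ((bSym hw).mulLp u)) := by
  rw [tendsto_iff_norm_sub_tendsto_zero]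
  have hb : ∀ N, ‖bPartial w u N - (bSym hw).mulLp u‖ ≤ ‖w‖ ^ N * ‖u‖ := by
    intro N
    refine norm_le_of_coeFn_le _ u (by positivity) ?_
    filter_upwards [Lp.coeFn_sub (bPartial w u N) ((bSym hw).mulLp u),
      bPartial_coeFn w u N, mulLp_coeFn (bSym hw) u] with x h1 h2 h3
    rw [h1, Pi.sub_apply, h2, h3]
    have hbs : (bSym hw).toFun x = blaschke w (circleCoord x) := rfl
    rw [hbs]
    have hkey := blaschke_partial_identity hw (norm_circleCoord x) N
    have heq : ((circleCoord x - w) * ∑ n ∈ Finset.range N, (conj w * circleCoord x) ^ n)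
          * u x - blaschke w (circleCoord x) * u x
        = -(blaschke w (circleCoord x) * (conj w * circleCoord x) ^ N) * u x := by
      rw [← hkey]
      ring
    rw [heq, norm_mul, norm_neg, norm_mul, norm_blaschke hw (norm_circleCoord x), one_mul,
      norm_pow, norm_mul, RCLike.norm_conj, norm_circleCoord, mul_one]
  refine squeeze_zero (fun N => norm_nonneg _) hb ?_
  have h1 : Tendsto (fun N : ℕ => ‖w‖ ^ N) atTop (𝓝 (0 : ℝ)) :=
    tendsto_pow_atTop_nhds_zero_of_lt_one (norm_nonneg w) hw
  simpa using h1.mul_const ‖u‖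

theorem bSym_mulLp_mem_hardy {w : ℂ} (hw : ‖w‖ < 1) {u : L2S} (hu : u ∈ hardyS) :
    (bSym hw).mulLp u ∈ hardyS := by
  have hclosed : IsClosed (hardyS : Set L2S) := Submodule.isClosed_orthogonal _
  exact hclosed.mem_of_tendsto (bPartial_tendsto hw u)
    (Filter.Eventually.of_forall fun N => bPartial_mem_hardy w hu N)

theorem eval_bSym {α w : ℂ} (hα : ‖α‖ < 1) (hw : ‖w‖ < 1) {u : L2S} (hu : u ∈ hardyS) :
    Eval α ((bSym hw).mulLp u) = blaschke w α * Eval α u := by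
  have h1 : ∀ N, Eval α (bPartial w u N)
      = (∑ n ∈ Finset.range N, (conj w) ^ n * (α ^ (n + 1) - w * α ^ n)) * Eval α u := by
    intro N
    induction N with
    | zero =>
      have h0 : bPartial w u 0 = 0 := by
        rw [bPartial, Finset.range_zero, Finset.sum_empty]
      rw [h0, eval_zero, Finset.range_zero, Finset.sum_empty, zero_mul]
    | succ N ih =>
      rw [bPartial_succ, eval_add hα, ih, eval_smul, eval_sub hα, eval_smul]
      have hs1 : Eval α ((eSym ((N : ℤ) + 1)).mulLp u) = α ^ (N + 1) * Eval α u := by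
        rw [show ((N : ℤ) + 1) = ((N + 1 : ℕ) : ℤ) by push_cast; ring]
        exact eval_shift hα hu (N + 1)
      have hs2 : Eval α ((eSym (N : ℤ)).mulLp u) = α ^ N * Eval α u := eval_shift hα hu N
      rw [hs1, hs2, Finset.sum_range_succ]
      ring
  have h2 := (eval_tendsto hα (bPartial_tendsto hw u)).congr h1
  have hwa : ‖conj w * α‖ < 1 := by
    rw [norm_mul, RCLike.norm_conj]
    nlinarith [norm_nonneg w, norm_nonneg α]
  have h3 : Tendsto
      (fun N => (∑ n ∈ Finset.range N, (conj w) ^ n * (α ^ (n + 1) - w * α ^ n)) * Eval α u)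
      atTop (𝓝 (blaschke w α * Eval α u)) := by
    have hgeom : Tendsto (fun N => ∑ n ∈ Finset.range N, (conj w * α) ^ n) atTop
        (𝓝 ((1 - conj w * α)⁻¹)) :=
      (hasSum_geometric_of_norm_lt_one hwa).tendsto_sum_nat
    have hEQ : ∀ N, (∑ n ∈ Finset.range N, (conj w) ^ n * (α ^ (n + 1) - w * α ^ n))
        = (α - w) * ∑ n ∈ Finset.range N, (conj w * α) ^ n := by
      intro N
      rw [Finset.mul_sum]
      refine Finset.sum_congr rfl fun n _ => by ring
    have h4 := (hgeom.const_mul (α - w)).mul_const (Eval α u)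
    have h5 : blaschke w α * Eval α u = ((α - w) * (1 - conj w * α)⁻¹) * Eval α u := by
      rw [blaschke, div_eq_mul_inv]
    rw [h5]
    refine h4.congr fun N => ?_
    rw [hEQ]
  exact tendsto_nhds_unique h2 h3

end BlockToeplitz

namespace BlockToeplitz
open scoped ComplexConjugate
open Filter Topology

local notation "⟪" x ", " y "⟫" => @inner ℂ _ _ x y

/- ### Division by a Blaschke factor -/

/-- Partial sums for multiplication by the conjugate of a Blaschke factor. -/
def bPartialC (α : ℂ) (u : L2S) (N : ℕ) : L2S :=
  ∑ n ∈ Finset.range N,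
    α ^ n • ((eSym (-(n : ℤ) - 1)).mulLp u - (conj α) • (eSym (-(n : ℤ))).mulLp u)

theorem bPartialC_succ (α : ℂ) (u : L2S) (N : ℕ) :
    bPartialC α u (N + 1) = bPartialC α u N
      + α ^ N • ((eSym (-(N : ℤ) - 1)).mulLp u - (conj α) • (eSym (-(N : ℤ))).mulLp u) :=
  Finset.sum_range_succ _ N

theorem bPartialC_coeFn (α : ℂ) (u : L2S) (N : ℕ) :
    (bPartialC α u N : 𝕋 → ℂ) =ᵐ[μ𝕋]
      fun x => ((conj (circleCoord x) - conj α)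
        * ∑ n ∈ Finset.range N, (α * conj (circleCoord x)) ^ n) * u x := by
  induction N with
  | zero =>
    have h0 : bPartialC α u 0 = 0 := by
      rw [bPartialC, Finset.range_zero, Finset.sum_empty]
    rw [h0]
    filter_upwards [Lp.coeFn_zero ℂ 2 μ𝕋] with x hx
    rw [hx]
    simp
  | succ N ih =>
    rw [bPartialC_succ]
    filter_upwards [Lp.coeFn_add (bPartialC α u N)
        (α ^ N • ((eSym (-(N : ℤ) - 1)).mulLp u - (conj α) • (eSym (-(N : ℤ))).mulLp u)), ih,
      Lp.coeFn_smul (α ^ N) ((eSym (-(N : ℤ) - 1)).mulLp u - (conj α) • (eSym (-(N : ℤ))).mulLp u),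
      Lp.coeFn_sub ((eSym (-(N : ℤ) - 1)).mulLp u) ((conj α) • (eSym (-(N : ℤ))).mulLp u),
      Lp.coeFn_smul (conj α) ((eSym (-(N : ℤ))).mulLp u),
      mulLp_coeFn (eSym (-(N : ℤ) - 1)) u, mulLp_coeFn (eSym (-(N : ℤ))) u]
      with x h1 h2 h3 h4 h5 h6 h7
    rw [h1, Pi.add_apply, h2, h3, Pi.smul_apply, h4, Pi.sub_apply, h5, Pi.smul_apply, h6, h7]
    have hp1 : (eSym (-(N : ℤ) - 1)).toFun x = conj (circleCoord x) ^ (N + 1) := by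
      show fourier (-(N : ℤ) - 1) x = _
      rw [show -(N : ℤ) - 1 = -((N : ℤ) + 1) by ring, fourier_neg,
        show ((N : ℤ) + 1) = ((N + 1 : ℕ) : ℤ) by push_cast; ring, fourier_natCast_pow, map_pow]
    have hp2 : (eSym (-(N : ℤ))).toFun x = conj (circleCoord x) ^ N := by
      show fourier (-(N : ℤ)) x = _
      rw [fourier_neg, fourier_natCast_pow, map_pow]
    rw [Finset.sum_range_succ]
    show _ + α ^ N • ((eSym (-(N : ℤ) - 1)).toFun x * u x
        - conj α • ((eSym (-(N : ℤ))).toFun x * u x)) = _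
    rw [hp1, hp2, smul_eq_mul, smul_eq_mul]
    ring

theorem bPartialC_tendsto {α : ℂ} (hα : ‖α‖ < 1) (u : L2S) :
    Tendsto (bPartialC α u) atTop (𝓝 ((bSym hα).conj.mulLp u)) := by
  rw [tendsto_iff_norm_sub_tendsto_zero]
  have hb : ∀ N, ‖bPartialC α u N - (bSym hα).conj.mulLp u‖ ≤ ‖α‖ ^ N * ‖u‖ := by
    intro N
    refine norm_le_of_coeFn_le _ u (by positivity) ?_
    filter_upwards [Lp.coeFn_sub (bPartialC α u N) ((bSym hα).conj.mulLp u),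
      bPartialC_coeFn α u N, mulLp_coeFn (bSym hα).conj u] with x h1 h2 h3
    rw [h1, Pi.sub_apply, h2, h3]
    have hbs : ((bSym hα).conj).toFun x = conj (blaschke α (circleCoord x)) := rfl
    rw [hbs]
    have hconj : (conj (circleCoord x) - conj α)
          * ∑ n ∈ Finset.range N, (α * conj (circleCoord x)) ^ n
        = conj ((circleCoord x - α)
          * ∑ n ∈ Finset.range N, (conj α * circleCoord x) ^ n) := by
      simp only [map_mul, map_sub, map_sum, map_pow, Complex.conj_conj]
    have hkey := blaschke_partial_identity hα (norm_circleCoord x) N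
    have heq : ((conj (circleCoord x) - conj α)
          * ∑ n ∈ Finset.range N, (α * conj (circleCoord x)) ^ n) * u x
          - conj (blaschke α (circleCoord x)) * u x
        = -(conj (blaschke α (circleCoord x) * (conj α * circleCoord x) ^ N)) * u x := by
      rw [hconj, ← hkey, map_sub]
      ring
    rw [heq, norm_mul, norm_neg, RCLike.norm_conj, norm_mul,
      norm_blaschke hα (norm_circleCoord x), one_mul, norm_pow, norm_mul, RCLike.norm_conj,
      norm_circleCoord, mul_one]
  refine squeeze_zero (fun N => norm_nonneg _) hb ?_
  have h1 : Tendsto (fun N : ℕ => ‖α‖ ^ N) atTop (𝓝 (0 : ℝ)) :=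
    tendsto_pow_atTop_nhds_zero_of_lt_one (norm_nonneg α) hα
  simpa using h1.mul_const ‖u‖

theorem coef_bPartialC (α : ℂ) (u : L2S) (k : ℤ) (N : ℕ) :
    coef (bPartialC α u N) k
      = ∑ n ∈ Finset.range N,
          (α ^ n * coef u ((k + 1) + n) - conj α * (α ^ n * coef u (k + n))) := by
  induction N with
  | zero =>
    rw [bPartialC, Finset.range_zero, Finset.sum_empty, Finset.sum_empty, coef_zero']
  | succ N ih =>
    rw [bPartialC_succ, coef_add, ih, coef_smul, coef_sub, coef_smul, coef_eSym_mulLp,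
      coef_eSym_mulLp, Finset.sum_range_succ]
    rw [show k - (-(N : ℤ) - 1) = (k + 1) + N by ring, show k - (-(N : ℤ)) = k + N by ring]
    ring

/-- Division by a Blaschke factor: if `u ∈ H²` vanishes at `α`, then `conj(b_α) u ∈ H²`. -/
theorem conj_bSym_mem_hardy {α : ℂ} (hα : ‖α‖ < 1) {u : L2S} (hu : u ∈ hardyS)
    (h0 : Eval α u = 0) : (bSym hα).conj.mulLp u ∈ hardyS := by
  rw [mem_hardyS_iff]
  intro k hk
  have htend := coef_tendsto (bPartialC_tendsto hα u) k
  have hS1 : ∑' n : ℕ, α ^ n * coef u ((k + 1) + n) = 0 := by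
    rw [tsum_coef_shift hα hu (by omega), h0, mul_zero]
  have hS2 : ∑' n : ℕ, α ^ n * coef u (k + n) = 0 := by
    rw [tsum_coef_shift hα hu (by omega), h0, mul_zero]
  have hA : Tendsto (fun N => ∑ n ∈ Finset.range N, α ^ n * coef u ((k + 1) + n))
      atTop (𝓝 0) := by
    have h := (eval_summable_aux hα u (fun n => (k + 1) + n)).hasSum.tendsto_sum_nat
    rwa [hS1] at h
  have hB : Tendsto (fun N => ∑ n ∈ Finset.range N, α ^ n * coef u (k + n))
      atTop (𝓝 0) := by
    have h := (eval_summable_aux hα u (fun n => k + n)).hasSum.tendsto_sum_nat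
    rwa [hS2] at h
  have hlim : Tendsto (fun N => coef (bPartialC α u N) k) atTop (𝓝 0) := by
    have h := hA.sub (hB.const_mul (conj α))
    rw [mul_zero, sub_zero] at h
    refine h.congr fun N => ?_
    rw [coef_bPartialC, Finset.sum_sub_distrib, Finset.mul_sum]
  exact tendsto_nhds_unique htend hlim

/- ### Products of Blaschke factors -/

theorem continuous_bprodFun (L : List ℂ) (hL : ∀ a ∈ L, ‖a‖ < 1) :
    Continuous fun x : 𝕋 => (L.map (fun a => blaschke a (circleCoord x))).prod := by
  induction L with
  | nil => simpa using continuous_const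
  | cons a L ih =>
    simp only [List.map_cons, List.prod_cons]
    exact (continuous_blaschke_comp (hL a (List.mem_cons_self))).mul
      (ih fun b hb => hL b (List.mem_cons_of_mem a hb))

theorem norm_bprodFun (L : List ℂ) (hL : ∀ a ∈ L, ‖a‖ < 1) (x : 𝕋) :
    ‖(L.map (fun a => blaschke a (circleCoord x))).prod‖ = 1 := by
  induction L with
  | nil => simp
  | cons a L ih =>
    simp only [List.map_cons, List.prod_cons]
    rw [norm_mul, norm_blaschke (hL a (List.mem_cons_self)) (norm_circleCoord x),
      one_mul]
    exact ih fun b hb => hL b (List.mem_cons_of_mem a hb)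

/-- A finite product of Blaschke factors, as a symbol. -/
def bProdSym (L : List ℂ) (hL : ∀ a ∈ L, ‖a‖ < 1) : SymbolS where
  toFun := fun x => (L.map (fun a => blaschke a (circleCoord x))).prod
  meas := (continuous_bprodFun L hL).aestronglyMeasurable
  bound := 1
  le_bound := fun x => le_of_eq (norm_bprodFun L hL x)

theorem bProdSym_nil_mulLp (h : ∀ a ∈ ([] : List ℂ), ‖a‖ < 1) (u : L2S) :
    (bProdSym [] h).mulLp u = u := by
  apply Lp.ext
  filter_upwards [mulLp_coeFn (bProdSym [] h) u] with x hx
  rw [hx]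
  simp [bProdSym]

theorem bProdSym_cons_mulLp (a : ℂ) (ha : ‖a‖ < 1) (L : List ℂ) (hL : ∀ b ∈ L, ‖b‖ < 1)
    (hAL : ∀ b ∈ a :: L, ‖b‖ < 1) (u : L2S) :
    (bProdSym (a :: L) hAL).mulLp u = (bSym ha).mulLp ((bProdSym L hL).mulLp u) := by
  apply Lp.ext
  filter_upwards [mulLp_coeFn (bProdSym (a :: L) hAL) u,
    mulLp_coeFn (bSym ha) ((bProdSym L hL).mulLp u), mulLp_coeFn (bProdSym L hL) u]
    with x h1 h2 h3
  rw [h1, h2, h3]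
  show (List.map (fun b => blaschke b (circleCoord x)) (a :: L)).prod * u x
      = blaschke a (circleCoord x) * ((List.map (fun b => blaschke b (circleCoord x)) L).prod
        * u x)
  rw [List.map_cons, List.prod_cons]
  ring

theorem bProdSym_mem_hardy (L : List ℂ) (hL : ∀ a ∈ L, ‖a‖ < 1) {u : L2S}
    (hu : u ∈ hardyS) : (bProdSym L hL).mulLp u ∈ hardyS := by
  induction L with
  | nil => rw [bProdSym_nil_mulLp]; exact hu
  | cons a L ih =>
    rw [bProdSym_cons_mulLp a (hL a (List.mem_cons_self)) L
      (fun b hb => hL b (List.mem_cons_of_mem a hb)) hL u]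
    exact bSym_mulLp_mem_hardy _ (ih _)

theorem eval_bProdSym {α : ℂ} (hα : ‖α‖ < 1) (L : List ℂ) (hL : ∀ a ∈ L, ‖a‖ < 1)
    {u : L2S} (hu : u ∈ hardyS) :
    Eval α ((bProdSym L hL).mulLp u)
      = (L.map (fun a => blaschke a α)).prod * Eval α u := by
  induction L with
  | nil => rw [bProdSym_nil_mulLp]; simp
  | cons a L ih =>
    rw [bProdSym_cons_mulLp a (hL a (List.mem_cons_self)) L
      (fun b hb => hL b (List.mem_cons_of_mem a hb)) hL u]
    rw [eval_bSym hα (hL a (List.mem_cons_self))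
      (bProdSym_mem_hardy L (fun b hb => hL b (List.mem_cons_of_mem a hb)) hu)]
    rw [ih (fun b hb => hL b (List.mem_cons_of_mem a hb)), List.map_cons, List.prod_cons]
    ring

/- ### A Blaschke factor is not a.e. constant on the circle -/

theorem circleCoord_zero : circleCoord ((0 : ℝ) : 𝕋) = 1 := by
  rw [circleCoord, fourier_coe_apply]
  norm_num

theorem circleCoord_pi : circleCoord ((π : ℝ) : 𝕋) = -1 := by
  rw [circleCoord, fourier_coe_apply]
  have hpi : (π : ℂ) ≠ 0 := Complex.ofReal_ne_zero.mpr Real.pi_ne_zero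
  have harg : 2 * (π : ℂ) * Complex.I * (((1 : ℤ) : ℂ)) * ((π : ℝ) : ℂ) / (((2 * π : ℝ)) : ℂ)
      = (π : ℂ) * Complex.I := by
    push_cast
    field_simp
  rw [harg]
  exact Complex.exp_pi_mul_I

theorem blaschke_not_ae_const {a : ℂ} (ha : ‖a‖ < 1) (c : ℂ)
    (h : ∀ᵐ x ∂μ𝕋, blaschke a (circleCoord x) = c) : False := by
  have hcont := continuous_blaschke_comp ha
  have heq : (fun x : 𝕋 => blaschke a (circleCoord x)) = fun _ => c :=
    (Continuous.ae_eq_iff_eq μ𝕋 hcont continuous_const).mp h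
  have hv1 : blaschke a 1 = c := by
    have := congrFun heq ((0 : ℝ) : 𝕋)
    rwa [circleCoord_zero] at this
  have hv2 : blaschke a (-1) = c := by
    have := congrFun heq ((π : ℝ) : 𝕋)
    rwa [circleCoord_pi] at this
  have hd1 : 1 - conj a * 1 ≠ 0 := blaschke_denom_ne_zero (by rw [norm_one, mul_one]; exact ha)
  have hd2 : 1 - conj a * (-1) ≠ 0 :=
    blaschke_denom_ne_zero (by rw [norm_neg, norm_one, mul_one]; exact ha)
  have hcross : (1 - a) * (1 - conj a * (-1)) = (-1 - a) * (1 - conj a * 1) := by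
    have h12 : blaschke a 1 = blaschke a (-1) := by rw [hv1, hv2]
    rw [blaschke, blaschke] at h12
    exact (div_eq_div_iff hd1 hd2).mp h12
  have haa : a * conj a = 1 := by linear_combination (-(1 : ℂ) / 2) * hcross
  have hnsq : Complex.normSq a = 1 := by
    have := Complex.mul_conj a
    rw [haa] at this
    exact_mod_cast this.symm
  have hlt : Complex.normSq a < 1 := by
    rw [Complex.normSq_eq_norm_sq]
    nlinarith [norm_nonneg a]
  linarith

end BlockToeplitz

namespace BlockToeplitz
open scoped ComplexConjugate
open Filter Topology

local notation "⟪" x ", " y "⟫" => @inner ℂ _ _ x y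

theorem conj_mul_of_norm_one {z : ℂ} (hz : ‖z‖ = 1) : conj z * z = 1 := by
  rw [mul_comm, Complex.mul_conj]
  norm_cast
  rw [Complex.normSq_eq_norm_sq, hz, one_pow]

theorem blaschke_circle_ne_zero {a : ℂ} (ha : ‖a‖ < 1) (x : 𝕋) :
    blaschke a (circleCoord x) ≠ 0 := by
  intro h
  have := norm_blaschke ha (norm_circleCoord x)
  rw [h, norm_zero] at this
  norm_num at this

/-- The key induction: divisibility together with coprimality forces the degree
inequality. -/
theorem key_induction (Lm : List ℂ) (hLm : ∀ a ∈ Lm, ‖a‖ < 1) :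
    ∀ (LP : List ℂ), (∀ a ∈ LP, ‖a‖ < 1) →
    ∀ (B Q : L2S), B ∈ hardyS → Q ∈ hardyS →
    (∀ᵐ x ∂μ𝕋, B x * (LP.map (fun a => blaschke a (circleCoord x))).prod
        = (Lm.map (fun a => blaschke a (circleCoord x))).prod * Q x) →
    (∀ d : SymbolS, d.IsInner →
      DividesH2 d (fun x => B x) →
      DividesH2 d (fun x => (Lm.map (fun a => blaschke a (circleCoord x))).prod) →
      ∃ c : ℂ, ∀ᵐ x ∂μ𝕋, d.toFun x = c) →
    Lm.length ≤ LP.length := by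
  induction Lm with
  | nil => intro LP _ B Q _ _ _ _; simp
  | cons α L' ih =>
    intro LP hLp B Q hB hQ heq hcop
    have hα : ‖α‖ < 1 := hLm α (List.mem_cons_self)
    have hL' : ∀ a ∈ L', ‖a‖ < 1 := fun a ha => hLm a (List.mem_cons_of_mem α ha)
    -- element-level equation
    have heq_elt : (bProdSym LP hLp).mulLp B = (bProdSym (α :: L') hLm).mulLp Q := by
      apply MeasureTheory.Lp.ext
      filter_upwards [mulLp_coeFn (bProdSym LP hLp) B, mulLp_coeFn (bProdSym (α :: L') hLm) Q,
        heq] with x h1 h2 h3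
      rw [h1, h2]
      show (LP.map (fun a => blaschke a (circleCoord x))).prod * B x
          = ((α :: L').map (fun a => blaschke a (circleCoord x))).prod * Q x
      rw [← h3]
      ring
    -- evaluate at α
    have hEvalL : Eval α ((bProdSym LP hLp).mulLp B)
        = (LP.map (fun a => blaschke a α)).prod * Eval α B := eval_bProdSym hα LP hLp hB
    have hEvalR : Eval α ((bProdSym (α :: L') hLm).mulLp Q) = 0 := by
      rw [eval_bProdSym hα (α :: L') hLm hQ, List.map_cons, List.prod_cons, blaschke_self,
        zero_mul, zero_mul]
    have hzero : (LP.map (fun a => blaschke a α)).prod * Eval α B = 0 := by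
      rw [← hEvalL, heq_elt, hEvalR]
    rcases mul_eq_zero.mp hzero with hcase | hcase
    · -- some Blaschke factor of LP vanishes at α, i.e. α ∈ LP
      have hmem : α ∈ LP := by
        rcases List.prod_eq_zero_iff.mp hcase with h0
        rcases List.mem_map.mp h0 with ⟨z, hz, hz0⟩
        have hd : 1 - conj z * α ≠ 0 := by
          refine blaschke_denom_ne_zero ?_
          have := hLp z hz
          nlinarith [norm_nonneg z, norm_nonneg α]
        have : α = z := (blaschke_eq_zero_iff hd).mp hz0
        rwa [this]
      set LP' := LP.erase α with hLp'def
      have hLp'sub : ∀ a ∈ LP', ‖a‖ < 1 := fun a ha => hLp a (List.mem_of_mem_erase ha)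
      have hperm : List.Perm LP (α :: LP') := List.perm_cons_erase hmem
      -- new a.e. equation
      have heq' : ∀ᵐ x ∂μ𝕋, B x * (LP'.map (fun a => blaschke a (circleCoord x))).prod
          = (L'.map (fun a => blaschke a (circleCoord x))).prod * Q x := by
        filter_upwards [heq] with x hx
        have hprod : (LP.map (fun a => blaschke a (circleCoord x))).prod
            = blaschke α (circleCoord x)
              * (LP'.map (fun a => blaschke a (circleCoord x))).prod := by
          rw [(hperm.map (fun a => blaschke a (circleCoord x))).prod_eq, List.map_cons,
            List.prod_cons]
        rw [hprod, List.map_cons, List.prod_cons] at hx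
        have hne := blaschke_circle_ne_zero hα x
        have hx' : blaschke α (circleCoord x)
              * (B x * (LP'.map (fun a => blaschke a (circleCoord x))).prod)
            = blaschke α (circleCoord x)
              * ((L'.map (fun a => blaschke a (circleCoord x))).prod * Q x) := by
          linear_combination hx
        exact mul_left_cancel₀ hne hx'
      -- new coprimality
      have hcop' : ∀ d : SymbolS, d.IsInner →
          DividesH2 d (fun x => B x) →
          DividesH2 d (fun x => (L'.map (fun a => blaschke a (circleCoord x))).prod) →
          ∃ c : ℂ, ∀ᵐ x ∂μ𝕋, d.toFun x = c := by
        intro d hd hdB hdL'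
        refine hcop d hd hdB ?_
        rcases hdL' with ⟨g, hg, hgH, hgeq⟩
        refine ⟨fun x => blaschke α (circleCoord x) * g x,
          memLp_bdd_mul hg (continuous_blaschke_comp hα).aestronglyMeasurable
            (C := 1) (fun x => le_of_eq (norm_blaschke hα (norm_circleCoord x))), ?_, ?_⟩
        · have helt : (memLp_bdd_mul hg (continuous_blaschke_comp hα).aestronglyMeasurable
              (C := 1) (fun x => le_of_eq (norm_blaschke hα (norm_circleCoord x)))).toLp _
              = (bSym hα).mulLp (hg.toLp g) := by
            apply MeasureTheory.Lp.ext
            filter_upwards [MemLp.coeFn_toLp (memLp_bdd_mul hg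
              (continuous_blaschke_comp hα).aestronglyMeasurable
              (C := 1) (fun x => le_of_eq (norm_blaschke hα (norm_circleCoord x)))),
              mulLp_coeFn (bSym hα) (hg.toLp g), hg.coeFn_toLp] with x h1 h2 h3
            rw [h1, h2, h3]
            rfl
          rw [helt]
          exact bSym_mulLp_mem_hardy hα hgH
        · filter_upwards [hgeq] with x hx
          show ((α :: L').map (fun a => blaschke a (circleCoord x))).prod
              = d.toFun x * (blaschke α (circleCoord x) * g x)
          rw [List.map_cons, List.prod_cons, hx]
          ring
      have hlen := ih hL' LP' hLp'sub B Q hB hQ heq' hcop'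
      have hlenLp : LP'.length + 1 = LP.length := List.length_erase_add_one hmem
      simp only [List.length_cons]
      omega
    · -- B vanishes at α: the Blaschke factor divides both B and the product — contradiction
      exfalso
      have hinner : (bSym hα).IsInner := by
        constructor
        · intro f hf
          exact bSym_mulLp_mem_hardy hα hf
        · exact Filter.Eventually.of_forall fun x => norm_blaschke hα (norm_circleCoord x)
      have hdivB : DividesH2 (bSym hα) (fun x => B x) := by
        have hmemg : MemLp (fun x => conj (blaschke α (circleCoord x)) * B x) 2 μ𝕋 :=
          memLp_bdd_mul (MeasureTheory.Lp.memLp B)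
            (Complex.continuous_conj.comp (continuous_blaschke_comp hα)).aestronglyMeasurable
            (C := 1) (fun x => by
              rw [RCLike.norm_conj]
              exact le_of_eq (norm_blaschke hα (norm_circleCoord x)))
        refine ⟨_, hmemg, ?_, ?_⟩
        · have helt : hmemg.toLp _ = (bSym hα).conj.mulLp B := by
            apply MeasureTheory.Lp.ext
            filter_upwards [hmemg.coeFn_toLp, mulLp_coeFn (bSym hα).conj B] with x h1 h2
            rw [h1, h2]
            rfl
          rw [helt]
          exact conj_bSym_mem_hardy hα hB hcase
        · refine Filter.Eventually.of_forall fun x => ?_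
          show B x = blaschke α (circleCoord x) * (conj (blaschke α (circleCoord x)) * B x)
          rw [← mul_assoc, mul_comm (blaschke α (circleCoord x)),
            conj_mul_of_norm_one (norm_blaschke hα (norm_circleCoord x)), one_mul]
      have hdivP : DividesH2 (bSym hα)
          (fun x => ((α :: L').map (fun a => blaschke a (circleCoord x))).prod) := by
        refine ⟨fun x => (L'.map (fun a => blaschke a (circleCoord x))).prod,
          (bProdSym L' hL').memLp2, ?_, ?_⟩
        · have helt : ((bProdSym L' hL').memLp2).toLp
              (fun x => (L'.map (fun a => blaschke a (circleCoord x))).prod)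
              = (bProdSym L' hL').mulLp (ek 0) := by
            apply MeasureTheory.Lp.ext
            show (((bProdSym L' hL').memLp2).toLp (bProdSym L' hL').toFun : 𝕋 → ℂ)
                =ᵐ[μ𝕋] _
            filter_upwards [((bProdSym L' hL').memLp2).coeFn_toLp,
              mulLp_coeFn (bProdSym L' hL') (ek 0), coeFn_ek 0] with x h1 h2 h3
            rw [h1, h2, h3]
            show _ = _ * fourier 0 x
            rw [fourier_zero, mul_one]
          rw [helt]
          exact bProdSym_mem_hardy L' hL' (ek_mem_hardyS le_rfl)
        · refine Filter.Eventually.of_forall fun x => ?_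
          show ((α :: L').map (fun a => blaschke a (circleCoord x))).prod
              = blaschke α (circleCoord x) * _
          rw [List.map_cons, List.prod_cons]
      rcases hcop (bSym hα) hinner hdivB hdivP with ⟨c, hc⟩
      exact blaschke_not_ae_const hα c hc

end BlockToeplitz



namespace BlockToeplitz
open scoped ComplexConjugate

/-- **Statement 14** (cf. Proposition 3.2). If `φ = φ̄₋ + φ₊ ∈ L^∞` is a rational
function (i.e. the inner parts `θ_p, θ_m` of the coprime factorizations `φ₊ = θ_p ā`,
`φ₋ = θ_m b̄` are finite Blaschke products) and the Toeplitz operator `T_φ` is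
hyponormal, then `deg(φ₋) ≤ deg(φ₊)`, where the degree is the degree (number of factors)
of the corresponding finite Blaschke product. In particular, for a trigonometric
polynomial `φ = ∑_{n=-m}^{N} a_n zⁿ` with `T_φ` hyponormal one has `m ≤ N`. -/
theorem statement14 (φ : SymbolS) (hyp : Hyponormal (toeplitzS φ))
    (θp θm : SymbolS) (hθp : θp.IsInner) (hθm : θm.IsInner)
    (cp cm : ℂ) (hcp : ‖cp‖ = 1) (hcm : ‖cm‖ = 1)
    (Lp Lm : List ℂ) (hLp : ∀ a ∈ Lp, ‖a‖ < 1) (hLm : ∀ a ∈ Lm, ‖a‖ < 1)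
    (hpf : ∀ x : 𝕋, θp.toFun x = cp * (Lp.map (fun a => blaschke a (circleCoord x))).prod)
    (hmf : ∀ x : 𝕋, θm.toFun x = cm * (Lm.map (fun a => blaschke a (circleCoord x))).prod)
    (a b : 𝕋 → ℂ) (ha : MemLp a 2 μ𝕋) (haH : ha.toLp a ∈ hardyS)
    (hb : MemLp b 2 μ𝕋) (hbH : hb.toLp b ∈ hardyS)
    (hplus : (((hardyProjS (φ.memLp2.toLp φ.toFun) : L2S)) : 𝕋 → ℂ)
        =ᵐ[μ𝕋] fun x => θp.toFun x * conj (a x))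
    (hminus : ((φ.memLp2.toLp φ.toFun - (hardyProjS (φ.memLp2.toLp φ.toFun) : L2S) : L2S)
          : 𝕋 → ℂ)
        =ᵐ[μ𝕋] fun x => conj (θm.toFun x) * b x)
    (hcopp : CoprimeH2 θp a) (hcopm : CoprimeH2 θm b) :
    Lm.length ≤ Lp.length := by
  have hθp1 : ∀ x, ‖θp.toFun x‖ = 1 := by
    intro x
    rw [hpf x, norm_mul, hcp, one_mul]
    exact norm_bprodFun Lp hLp x
  have hθm1 : ∀ x, ‖θm.toFun x‖ = 1 := by
    intro x
    rw [hmf x, norm_mul, hcm, one_mul]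
    exact norm_bprodFun Lm hLm x
  have hcpne : cp ≠ 0 := by
    intro h; rw [h, norm_zero] at hcp; norm_num at hcp
  have hcmne : cm ≠ 0 := by
    intro h; rw [h, norm_zero] at hcm; norm_num at hcm
  -- decomposition of φ
  have hPφmem : (hardyProjS (φ.memLp2.toLp φ.toFun) : L2S) ∈ hardyS :=
    (hardyProjS (φ.memLp2.toLp φ.toFun)).2
  have hcoefPφ : ∀ j < 0, coef ((hardyProjS (φ.memLp2.toLp φ.toFun) : L2S)) j = 0 :=
    (mem_hardyS_iff _).mp hPφmem
  have hZorth : (φ.memLp2.toLp φ.toFun - (hardyProjS (φ.memLp2.toLp φ.toFun) : L2S) : L2S)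
      ∈ hardySᗮ := sub_starProjection_mem_orthogonal (K := hardyS) _
  have hcoefZ : ∀ j : ℤ, 0 ≤ j →
      coef (φ.memLp2.toLp φ.toFun - (hardyProjS (φ.memLp2.toLp φ.toFun) : L2S) : L2S) j = 0 :=
    fun j hj => (Submodule.mem_orthogonal _ _).mp hZorth (ek j) (ek_mem_hardyS hj)
  have hφdec : ∀ᵐ x ∂μ𝕋,
      φ.toFun x = θp.toFun x * conj (a x) + conj (θm.toFun x) * b x := by
    filter_upwards [φ.memLp2.coeFn_toLp, hplus, hminus,
      MeasureTheory.Lp.coeFn_sub (φ.memLp2.toLp φ.toFun)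
        ((hardyProjS (φ.memLp2.toLp φ.toFun) : L2S))] with x h1 h2 h3 h4
    rw [Pi.sub_apply] at h4
    rw [← h2, ← h3, ← h1]
    rw [h4]
    ring
  -- the constant function 1 and the element θp·1
  have he0 : ek 0 ∈ hardyS := ek_mem_hardyS le_rfl
  have hu0 : θp.mulLp (ek 0) ∈ hardyS := hθp.1 (ek 0) he0
  -- Step 3 : conj φ · θp ∈ H²
  have hG : φ.conj.mulLp (θp.mulLp (ek 0)) ∈ hardyS := by
    rw [mem_hardyS_iff]
    intro k hk
    have hA : ∀ j < 0, coef (ha.toLp a) j = 0 := (mem_hardyS_iff _).mp haH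
    have h1 := ana1 (ha.toLp a) (ek 0) hA he0 hk
    have h2 := ana2 (φ.memLp2.toLp φ.toFun - (hardyProjS (φ.memLp2.toLp φ.toFun) : L2S))
      (θp.mulLp (ek 0)) hcoefZ hu0 hk
    have hint1 : Integrable
        (fun x => conj (fourier k x) * ((ha.toLp a : 𝕋 → ℂ) x * (ek 0 : 𝕋 → ℂ) x)) μ𝕋 := by
      refine (integrable_L2_mul (ha.toLp a) (ek 0)).bdd_mul
        (Complex.continuous_conj.comp (map_continuous (fourier k))).aestronglyMeasurable
        (c := 1) (Filter.Eventually.of_forall fun x => ?_)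
      rw [RCLike.norm_conj]
      exact le_of_eq (norm_fourier_apply k x)
    have hint2 : Integrable (fun x => conj (fourier k x)
        * (conj ((φ.memLp2.toLp φ.toFun
            - (hardyProjS (φ.memLp2.toLp φ.toFun) : L2S) : L2S) x)
          * (θp.mulLp (ek 0) : 𝕋 → ℂ) x)) μ𝕋 := by
      have hi := MeasureTheory.L2.integrable_inner (𝕜 := ℂ)
        (φ.memLp2.toLp φ.toFun - (hardyProjS (φ.memLp2.toLp φ.toFun) : L2S) : L2S)
        (θp.mulLp (ek 0))
      have hi' : Integrable (fun x =>
          conj ((φ.memLp2.toLp φ.toFun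
              - (hardyProjS (φ.memLp2.toLp φ.toFun) : L2S) : L2S) x)
            * (θp.mulLp (ek 0) : 𝕋 → ℂ) x) μ𝕋 :=
        hi.congr (Filter.Eventually.of_forall fun x => RCLike.inner_apply' _ _)
      refine hi'.bdd_mul
        (Complex.continuous_conj.comp (map_continuous (fourier k))).aestronglyMeasurable
        (c := 1) (Filter.Eventually.of_forall fun x => ?_)
      rw [RCLike.norm_conj]
      exact le_of_eq (norm_fourier_apply k x)
    have hsplit : coef (φ.conj.mulLp (θp.mulLp (ek 0))) k
        = (∫ x, conj (fourier k x)
              * ((ha.toLp a : 𝕋 → ℂ) x * (ek 0 : 𝕋 → ℂ) x) ∂μ𝕋)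
          + (∫ x, conj (fourier k x)
              * (conj ((φ.memLp2.toLp φ.toFun
                  - (hardyProjS (φ.memLp2.toLp φ.toFun) : L2S) : L2S) x)
                * (θp.mulLp (ek 0) : 𝕋 → ℂ) x) ∂μ𝕋) := by
      rw [coef_eq_integral, ← integral_add hint1 hint2]
      refine integral_congr_ae ?_
      filter_upwards [mulLp_coeFn φ.conj (θp.mulLp (ek 0)), mulLp_coeFn θp (ek 0),
        coeFn_ek 0, hφdec, ha.coeFn_toLp, hminus] with x g1 g2 g3 g4 g5 g6
      rw [g1, g2, g3, g5, g6, fourier_zero]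
      have hφx : φ.conj.toFun x = conj (θp.toFun x) * a x + θm.toFun x * conj (b x) := by
        show conj (φ.toFun x) = _
        rw [g4, map_add, map_mul, map_mul, Complex.conj_conj, Complex.conj_conj]
      rw [hφx, map_mul, Complex.conj_conj]
      have hθpθ : conj (θp.toFun x) * θp.toFun x = 1 := conj_mul_of_norm_one (hθp1 x)
      linear_combination conj (fourier k x) * a x * hθpθ
    rw [hsplit, h1, h2, add_zero]
  -- Step 4 : hyponormality gives φ · θp ∈ H²
  have hF : φ.mulLp (θp.mulLp (ek 0)) ∈ hardyS := hypo_key hyp _ hu0 hG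
  -- Step 5 : conj θm · θp · b ∈ H²
  have hbθp : MemLp (fun x => θp.toFun x * b x) 2 μ𝕋 := memLp_bdd_mul hb θp.meas θp.le_bound
  have hW3mem : MemLp (fun x => conj (θm.toFun x) * (θp.toFun x * b x)) 2 μ𝕋 := by
    refine memLp_bdd_mul hbθp
      (Complex.continuous_conj.comp_aestronglyMeasurable θm.meas) (C := θm.bound) ?_
    intro x
    rw [RCLike.norm_conj]
    exact θm.le_bound x
  have hW3 : hW3mem.toLp _ ∈ hardyS := by
    rw [mem_hardyS_iff]
    intro k hk
    have hT1 := ana1 ((hardyProjS (φ.memLp2.toLp φ.toFun) : L2S)) (θp.mulLp (ek 0))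
      hcoefPφ hu0 hk
    have hintA : Integrable (fun x => conj (fourier k x)
        * (((hardyProjS (φ.memLp2.toLp φ.toFun) : L2S) : 𝕋 → ℂ) x
          * (θp.mulLp (ek 0) : 𝕋 → ℂ) x)) μ𝕋 := by
      refine (integrable_L2_mul _ _).bdd_mul
        (Complex.continuous_conj.comp (map_continuous (fourier k))).aestronglyMeasurable
        (c := 1) (Filter.Eventually.of_forall fun x => ?_)
      rw [RCLike.norm_conj]
      exact le_of_eq (norm_fourier_apply k x)
    have hintB : Integrable (fun x => conj (fourier k x)
        * (conj (θm.toFun x) * (θp.toFun x * b x))) μ𝕋 := by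
      refine (hW3mem.integrable one_le_two).bdd_mul
        (Complex.continuous_conj.comp (map_continuous (fourier k))).aestronglyMeasurable
        (c := 1) (Filter.Eventually.of_forall fun x => ?_)
      rw [RCLike.norm_conj]
      exact le_of_eq (norm_fourier_apply k x)
    have hcoefF : coef (φ.mulLp (θp.mulLp (ek 0))) k
        = (∫ x, conj (fourier k x)
            * (((hardyProjS (φ.memLp2.toLp φ.toFun) : L2S) : 𝕋 → ℂ) x
              * (θp.mulLp (ek 0) : 𝕋 → ℂ) x) ∂μ𝕋)
          + (∫ x, conj (fourier k x) * (conj (θm.toFun x) * (θp.toFun x * b x)) ∂μ𝕋) := by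
      rw [coef_eq_integral, ← integral_add hintA hintB]
      refine integral_congr_ae ?_
      filter_upwards [mulLp_coeFn φ (θp.mulLp (ek 0)), mulLp_coeFn θp (ek 0), coeFn_ek 0,
        hφdec, hplus] with x g1 g2 g3 g4 g5
      rw [g1, g2, g3, g5, g4, fourier_zero]
      ring
    have hzF : coef (φ.mulLp (θp.mulLp (ek 0))) k = 0 := (mem_hardyS_iff _).mp hF k hk
    have := hzF
    rw [hcoefF, hT1, zero_add] at this
    rw [coef_toLp hW3mem k]
    exact this
  -- assemble the final divisibility equation
  have heqfin : ∀ᵐ x ∂μ𝕋,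
      (hb.toLp b : 𝕋 → ℂ) x * (Lp.map (fun a => blaschke a (circleCoord x))).prod
        = (Lm.map (fun a => blaschke a (circleCoord x))).prod
          * (((cp⁻¹ * cm) • hW3mem.toLp _ : L2S) : 𝕋 → ℂ) x := by
    filter_upwards [hb.coeFn_toLp, hW3mem.coeFn_toLp,
      MeasureTheory.Lp.coeFn_smul (cp⁻¹ * cm) (hW3mem.toLp _)] with x h1 h2 h3
    rw [h1, h3, Pi.smul_apply, h2, smul_eq_mul]
    have hθmθ : conj (θm.toFun x) * θm.toFun x = 1 := conj_mul_of_norm_one (hθm1 x)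
    have hp' : (Lp.map (fun a => blaschke a (circleCoord x))).prod = cp⁻¹ * θp.toFun x := by
      rw [hpf x, ← mul_assoc, inv_mul_cancel₀ hcpne, one_mul]
    have hm' : (Lm.map (fun a => blaschke a (circleCoord x))).prod = cm⁻¹ * θm.toFun x := by
      rw [hmf x, ← mul_assoc, inv_mul_cancel₀ hcmne, one_mul]
    rw [hp', hm']
    have hcm1 : cm⁻¹ * cm = 1 := inv_mul_cancel₀ hcmne
    linear_combination (-(cp⁻¹ * θp.toFun x * b x)) * hθmθ
      + (-(cp⁻¹ * θp.toFun x * b x * (conj (θm.toFun x) * θm.toFun x))) * hcm1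
  -- the coprimality hypothesis in product form
  have hcopfin : ∀ d : SymbolS, d.IsInner →
      DividesH2 d (fun x => (hb.toLp b : 𝕋 → ℂ) x) →
      DividesH2 d (fun x => (Lm.map (fun a => blaschke a (circleCoord x))).prod) →
      ∃ c : ℂ, ∀ᵐ x ∂μ𝕋, d.toFun x = c := by
    intro d hdin hdB hdM
    refine hcopm d hdin ?_ ?_
    · rcases hdB with ⟨g, hg, hgH, hge⟩
      refine ⟨g, hg, hgH, ?_⟩
      filter_upwards [hge, hb.coeFn_toLp] with x e1 e2
      rw [← e2]
      exact e1
    · rcases hdM with ⟨g, hg, hgH, hge⟩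
      have hgcm : MemLp (fun x => cm * g x) 2 μ𝕋 := hg.const_mul cm
      refine ⟨fun x => cm * g x, hgcm, ?_, ?_⟩
      · rw [mem_hardyS_iff]
        intro k hk
        rw [coef_toLp hgcm k]
        have hgz : coef (hg.toLp g) k = 0 := (mem_hardyS_iff _).mp hgH k hk
        rw [coef_toLp hg k] at hgz
        calc (∫ x, conj (fourier k x) * (cm * g x) ∂μ𝕋)
            = ∫ x, cm * (conj (fourier k x) * g x) ∂μ𝕋 := by
              refine integral_congr_ae (Filter.Eventually.of_forall fun x => ?_)
              ring
          _ = cm * ∫ x, conj (fourier k x) * g x ∂μ𝕋 := integral_const_mul cm _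
          _ = 0 := by rw [hgz, mul_zero]
      · filter_upwards [hge] with x e1
        rw [hmf x, e1]
        ring
  exact key_induction Lm hLm Lp hLp (hb.toLp b) ((cp⁻¹ * cm) • hW3mem.toLp _)
    hbH (Submodule.smul_mem _ _ hW3) heqfin hcopfin

end BlockToeplitz
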